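/- arXiv:1907.02578 — 4 statements merged into one kernel-verified Lean document; each statement's English description precedes it below -/
import Mathlib

section
/- For every integer x ≥ 1 with P(M_τ = x) > 0, the random variables θ_τ and τ − θ_τ are independent under the conditional probability measure P(· | M_τ = x): for all integers k, j ≥ 1, P(θ_τ = k, τ − θ_τ = j | M_τ = x) = P(θ_τ = k | M_τ = x) · P(τ − θ_τ = j | M_τ = x). -/
open MeasureTheory ProbabilityTheory Filter Real

variable {Ω : Type*}

/-- Partial sums of the increments: `Swalk X n = X 0 + ⋯ + X (n-1)` (the increments are
indexed from `0`, so `X 0` plays the role of `X₁`), with `Swalk X 0 = 0`. -/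
def Swalk (X : ℕ → Ω → ℤ) (n : ℕ) (ω : Ω) : ℤ := ∑ i ∈ Finset.range n, X i ω

/-- `τ = inf {n ≥ 1 : S n ≤ 0}` (junk value `0` when the walk never becomes nonpositive). -/
noncomputable def tauN (X : ℕ → Ω → ℤ) (ω : Ω) : ℕ :=
  sInf {n : ℕ | 1 ≤ n ∧ Swalk X n ω ≤ 0}

/-- `M_τ = max_{k ≤ τ} S k`. -/
noncomputable def Mtau (X : ℕ → Ω → ℤ) (ω : Ω) : ℤ :=
  (Finset.range (tauN X ω + 1)).sup'
    (Finset.nonempty_range_iff.mpr (Nat.succ_ne_zero _)) (fun k => Swalk X k ω)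

/-- `θ_τ = min {n ≥ 0 : S n = M_τ}`. -/
noncomputable def thetaTau (X : ℕ → Ω → ℤ) (ω : Ω) : ℕ :=
  sInf {n : ℕ | Swalk X n ω = Mtau X ω}

/-- `M n = max_{k ≤ n} S k`. -/
noncomputable def Mwalk (X : ℕ → Ω → ℤ) (n : ℕ) (ω : Ω) : ℤ :=
  (Finset.range (n + 1)).sup'
    (Finset.nonempty_range_iff.mpr (Nat.succ_ne_zero _)) (fun k => Swalk X k ω)

/-- Probability of an event, as a real number. -/
noncomputable def pr [MeasurableSpace Ω] (P : Measure Ω) (E : Set Ω) : ℝ := (P E).toReal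

/-- Standard normal distribution function `Φ`. -/
noncomputable def stdPhi (x : ℝ) : ℝ :=
  (Real.sqrt (2 * π))⁻¹ * ∫ t in Set.Iic x, Real.exp (-t ^ 2 / 2)

/-! ### Auxiliary definitions -/

/-- Event depending on the first `k` increments: the walk first reaches level `x` at time `k`,
staying positive in between. -/
def Aev (X : ℕ → Ω → ℤ) (x k : ℕ) : Set Ω :=
  {ω | (∀ i < k, Swalk X i ω < (x : ℤ)) ∧ Swalk X k ω = (x : ℤ) ∧
    ∀ i, 1 ≤ i → i ≤ k → 0 < Swalk X i ω}

/-- Event depending on the increments `X k, …, X (k+j-1)`: the shifted walk stays in `(-x, 0]`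
for `j - 1` steps and drops to `≤ -x` at step `j`. -/
def Bev (X : ℕ → Ω → ℤ) (x k j : ℕ) : Set Ω :=
  {ω | (∀ m, 1 ≤ m → m ≤ j → ∑ i ∈ Finset.range m, X (k + i) ω ≤ 0) ∧
    (∀ m, 1 ≤ m → m < j → -(x : ℤ) < ∑ i ∈ Finset.range m, X (k + i) ω) ∧
    ∑ i ∈ Finset.range j, X (k + i) ω ≤ -(x : ℤ)}

lemma swalk_zero (X : ℕ → Ω → ℤ) (ω : Ω) : Swalk X 0 ω = 0 := by simp [Swalk]

lemma Mtau_eq_sup (X : ℕ → Ω → ℤ) (ω : Ω) (n : ℕ) (h : tauN X ω = n) :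
    Mtau X ω = (Finset.range (n + 1)).sup'
      (Finset.nonempty_range_iff.mpr (Nat.succ_ne_zero _)) (fun k => Swalk X k ω) := by
  subst h; rfl

lemma swalk_add (X : ℕ → Ω → ℤ) (k m : ℕ) (ω : Ω) :
    Swalk X (k + m) ω = Swalk X k ω + ∑ i ∈ Finset.range m, X (k + i) ω :=
  Finset.sum_range_add (fun i => X i ω) k m

/-- Structural facts about the walk on the event `Mtau = x`, `x ≥ 1`. -/
lemma Mtau_facts (X : ℕ → Ω → ℤ) (x : ℕ) (hx : 1 ≤ x) (ω : Ω)
    (hM : Mtau X ω = (x : ℤ)) :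
    1 ≤ tauN X ω ∧ Swalk X (tauN X ω) ω ≤ 0 ∧
    (∀ i, 1 ≤ i → i < tauN X ω → 0 < Swalk X i ω) ∧
    (∀ i, i ≤ tauN X ω → Swalk X i ω ≤ (x : ℤ)) ∧
    Swalk X (thetaTau X ω) ω = (x : ℤ) ∧
    thetaTau X ω < tauN X ω ∧ 1 ≤ thetaTau X ω ∧
    (∀ i, i < thetaTau X ω → Swalk X i ω ≠ (x : ℤ)) := by
  have hxz : (1 : ℤ) ≤ (x : ℤ) := by exact_mod_cast hx
  -- the defining set of `tauN` is nonempty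
  have hne : {n : ℕ | 1 ≤ n ∧ Swalk X n ω ≤ 0}.Nonempty := by
    by_contra h
    rw [Set.not_nonempty_iff_eq_empty] at h
    have htau0 : tauN X ω = 0 := by rw [tauN, h, Nat.sInf_empty]
    have : Mtau X ω = 0 := by
      rw [Mtau_eq_sup X ω 0 htau0]
      simp [Finset.range_one, swalk_zero]
    rw [hM] at this; omega
  have hτ := Nat.sInf_mem hne
  rw [← tauN] at hτ  -- hτ : tauN X ω ∈ set
  obtain ⟨hτ1, hτle⟩ := hτ
  have hτmin : ∀ i, 1 ≤ i → i < tauN X ω → 0 < Swalk X i ω := by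
    intro i h1 hi
    have h2 := Nat.notMem_of_lt_sInf (s := {n : ℕ | 1 ≤ n ∧ Swalk X n ω ≤ 0}) hi
    simp only [Set.mem_setOf_eq, not_and] at h2
    exact lt_of_not_ge (h2 h1)
  have hle : ∀ i, i ≤ tauN X ω → Swalk X i ω ≤ (x : ℤ) := by
    intro i hi
    have : Swalk X i ω ≤ Mtau X ω :=
      Finset.le_sup' (fun n => Swalk X n ω) (Finset.mem_range.mpr (by omega))
    rwa [hM] at this
  -- the maximum is attained
  obtain ⟨b, hb, hbeq⟩ := Finset.exists_mem_eq_sup'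
    (Finset.nonempty_range_iff.mpr (Nat.succ_ne_zero (tauN X ω)))
    (fun n => Swalk X n ω)
  have hbM : Swalk X b ω = Mtau X ω := hbeq.symm
  have hθne : {n : ℕ | Swalk X n ω = Mtau X ω}.Nonempty := ⟨b, hbM⟩
  have hθmem := Nat.sInf_mem hθne
  rw [← thetaTau] at hθmem
  have hθx : Swalk X (thetaTau X ω) ω = (x : ℤ) := by rw [hθmem, hM]
  have hθleb : thetaTau X ω ≤ b := Nat.sInf_le hbM
  have hθleτ : thetaTau X ω ≤ tauN X ω := by
    have := Finset.mem_range.mp hb; omega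
  have hθltτ : thetaTau X ω < tauN X ω := by
    rcases lt_or_eq_of_le hθleτ with h | h
    · exact h
    · exfalso; rw [h] at hθx; rw [hθx] at hτle; omega
  have hθ1 : 1 ≤ thetaTau X ω := by
    by_contra h
    have h0 : thetaTau X ω = 0 := by omega
    rw [h0, swalk_zero] at hθx; omega
  have hθmin : ∀ i, i < thetaTau X ω → Swalk X i ω ≠ (x : ℤ) := by
    intro i hi hcon
    have h2 := Nat.notMem_of_lt_sInf (s := {n : ℕ | Swalk X n ω = Mtau X ω}) hi
    exact h2 (by rw [Set.mem_setOf_eq, hcon, hM])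
  exact ⟨hτ1, hτle, hτmin, hle, hθx, hθltτ, hθ1, hθmin⟩

/-- The key deterministic decomposition: the event `{θ = k, τ - θ = j, M = x}` coincides with
`Aev ∩ Bev`. -/
lemma event_eq (X : ℕ → Ω → ℤ) (x k j : ℕ) (hx : 1 ≤ x) (hk : 1 ≤ k) (hj : 1 ≤ j) :
    {ω : Ω | thetaTau X ω = k ∧ tauN X ω - thetaTau X ω = j ∧ Mtau X ω = (x : ℤ)}
      = Aev X x k ∩ Bev X x k j := by
  have hxz : (1 : ℤ) ≤ (x : ℤ) := by exact_mod_cast hx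
  ext ω
  constructor
  · rintro ⟨hθk, hτθ, hM⟩
    obtain ⟨hτ1, hτle, hτmin, hle, hθx, hθltτ, hθ1, hθmin⟩ := Mtau_facts X x hx ω hM
    rw [hθk] at hθx hθltτ hθmin hτθ
    have hτeq : tauN X ω = k + j := by omega
    constructor
    · refine ⟨fun i hi => ?_, hθx, fun i h1 hik => ?_⟩
      · exact lt_of_le_of_ne (hle i (by omega)) (hθmin i hi)
      · exact hτmin i h1 (by omega)
    · have hsum : ∀ m, ∑ i ∈ Finset.range m, X (k + i) ω = Swalk X (k + m) ω - (x : ℤ) := by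
        intro m
        have := swalk_add X k m ω
        rw [hθx] at this; omega
      refine ⟨fun m h1 hm => ?_, fun m h1 hm => ?_, ?_⟩
      · rw [hsum]
        have := hle (k + m) (by omega); omega
      · rw [hsum]
        have := hτmin (k + m) (by omega) (by omega); omega
      · rw [hsum]
        have : Swalk X (k + j) ω ≤ 0 := by rw [← hτeq]; exact hτle
        omega
  · rintro ⟨⟨hA1, hA2, hA3⟩, hB1, hB2, hB3⟩
    have hsum : ∀ m, Swalk X (k + m) ω = (x : ℤ) + ∑ i ∈ Finset.range m, X (k + i) ω := by
      intro m
      have := swalk_add X k m ω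
      rw [hA2] at this; omega
    set n := k + j with hn
    have hSn : Swalk X n ω ≤ 0 := by
      rw [hsum j]; omega
    have hpos : ∀ i, 1 ≤ i → i < n → 0 < Swalk X i ω := by
      intro i h1 hi
      rcases le_or_gt i k with h | h
      · exact hA3 i h1 h
      · have hi' : i = k + (i - k) := by omega
        rw [hi', hsum (i - k)]
        have := hB2 (i - k) (by omega) (by omega)
        omega
    -- τ = n
    have hmem : n ∈ {m : ℕ | 1 ≤ m ∧ Swalk X m ω ≤ 0} := ⟨by omega, hSn⟩
    have hτeq : tauN X ω = n := by
      have h1 : tauN X ω ≤ n := Nat.sInf_le hmem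
      have h2 := Nat.sInf_mem (⟨n, hmem⟩ : {m : ℕ | 1 ≤ m ∧ Swalk X m ω ≤ 0}.Nonempty)
      rw [← tauN] at h2
      rcases lt_or_eq_of_le h1 with h | h
      · exfalso
        have := hpos (tauN X ω) h2.1 h
        have := h2.2; omega
      · exact h
    -- S i ≤ x for i ≤ n
    have hSle : ∀ i, i ≤ n → Swalk X i ω ≤ (x : ℤ) := by
      intro i hi
      rcases lt_trichotomy i k with h | h | h
      · exact le_of_lt (hA1 i h)
      · rw [h, hA2]
      · have hi' : i = k + (i - k) := by omega
        rw [hi', hsum (i - k)]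
        have := hB1 (i - k) (by omega) (by omega)
        omega
    -- M = x
    have hMeq : Mtau X ω = (x : ℤ) := by
      rw [Mtau_eq_sup X ω n hτeq]
      apply le_antisymm
      · apply Finset.sup'_le
        intro i hi
        exact hSle i (by have := Finset.mem_range.mp hi; omega)
      · have hkmem : k ∈ Finset.range (n + 1) := Finset.mem_range.mpr (by omega)
        have : Swalk X k ω ≤ (Finset.range (n + 1)).sup'
            (Finset.nonempty_range_iff.mpr (Nat.succ_ne_zero _)) (fun m => Swalk X m ω) :=
          Finset.le_sup' (fun m => Swalk X m ω) hkmem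
        rw [hA2] at this; exact this
    -- θ = k
    have hθeq : thetaTau X ω = k := by
      have hkmem : k ∈ {m : ℕ | Swalk X m ω = Mtau X ω} := by
        rw [Set.mem_setOf_eq, hA2, hMeq]
      have h1 : thetaTau X ω ≤ k := Nat.sInf_le hkmem
      have h2 := Nat.sInf_mem (⟨k, hkmem⟩ : {m : ℕ | Swalk X m ω = Mtau X ω}.Nonempty)
      rw [← thetaTau] at h2
      rcases lt_or_eq_of_le h1 with h | h
      · exfalso
        have := hA1 _ h
        rw [Set.mem_setOf_eq, hMeq] at h2
        omega
      · exact h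
    exact ⟨hθeq, by omega, hMeq⟩

/-- On the event `Mtau = x` with `x ≥ 1`, both `θ` and `τ - θ` are at least 1. -/
lemma Mtau_theta_pos (X : ℕ → Ω → ℤ) (x : ℕ) (hx : 1 ≤ x) (ω : Ω)
    (hM : Mtau X ω = (x : ℤ)) :
    1 ≤ thetaTau X ω ∧ 1 ≤ tauN X ω - thetaTau X ω := by
  obtain ⟨_, _, _, _, _, hθltτ, hθ1, _⟩ := Mtau_facts X x hx ω hM
  exact ⟨hθ1, by omega⟩

/-! ### Tuple events -/

/-- Partial sums of a finite tuple. -/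
def psum (n : ℕ) (v : Fin n → ℤ) (m : ℕ) : ℤ :=
  ∑ i ∈ Finset.univ.filter (fun i : Fin n => (i : ℕ) < m), v i

lemma psum_apply (n m : ℕ) (hmn : m ≤ n) (w : ℕ → ℤ) :
    psum n (fun i => w i) m = ∑ i ∈ Finset.range m, w i := by
  rw [psum, Finset.sum_filter,
    Fin.sum_univ_eq_sum_range (fun t => if t < m then w t else 0) n,
    ← Finset.sum_subset (Finset.range_subset_range.mpr hmn)
      (fun t _ ht => if_neg (by simpa using ht))]
  exact Finset.sum_congr rfl fun i hi => if_pos (Finset.mem_range.mp hi)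

/-- The set of tuples corresponding to `Aev`. -/
def SAset (x k : ℕ) : Set (Fin k → ℤ) :=
  {v | (∀ i < k, psum k v i < (x : ℤ)) ∧ psum k v k = (x : ℤ) ∧
    ∀ i, 1 ≤ i → i ≤ k → 0 < psum k v i}

/-- The set of tuples corresponding to `Bev`. -/
def SBset (x j : ℕ) : Set (Fin j → ℤ) :=
  {v | (∀ m, 1 ≤ m → m ≤ j → psum j v m ≤ 0) ∧
    (∀ m, 1 ≤ m → m < j → -(x : ℤ) < psum j v m) ∧ psum j v j ≤ -(x : ℤ)}

lemma Aev_eq_preimage (X : ℕ → Ω → ℤ) (x k : ℕ) :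
    Aev X x k = (fun ω (i : Fin k) => X i ω) ⁻¹' SAset x k := by
  ext ω
  simp only [Aev, SAset, Set.mem_setOf_eq, Set.mem_preimage]
  have h : ∀ m, m ≤ k → psum k (fun i : Fin k => X i ω) m = Swalk X m ω := fun m hm =>
    psum_apply k m hm (fun i => X i ω)
  constructor
  · rintro ⟨h1, h2, h3⟩
    exact ⟨fun i hi => by rw [h i (le_of_lt hi)]; exact h1 i hi,
      by rw [h k le_rfl]; exact h2,
      fun i hi hik => by rw [h i hik]; exact h3 i hi hik⟩
  · rintro ⟨h1, h2, h3⟩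
    refine ⟨fun i hi => ?_, ?_, fun i hi hik => ?_⟩
    · have := h1 i hi; rwa [h i (le_of_lt hi)] at this
    · have := h2; rwa [h k le_rfl] at this
    · have := h3 i hi hik; rwa [h i hik] at this

lemma Bev_eq_preimage (X : ℕ → Ω → ℤ) (x k j : ℕ) :
    Bev X x k j = (fun ω (i : Fin j) => X (k + i) ω) ⁻¹' SBset x j := by
  ext ω
  simp only [Bev, SBset, Set.mem_setOf_eq, Set.mem_preimage]
  have h : ∀ m, m ≤ j → psum j (fun i : Fin j => X (k + i) ω) m
      = ∑ i ∈ Finset.range m, X (k + i) ω := fun m hm =>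
    psum_apply j m hm (fun i => X (k + i) ω)
  constructor
  · rintro ⟨h1, h2, h3⟩
    exact ⟨fun m hm hmj => by rw [h m hmj]; exact h1 m hm hmj,
      fun m hm hmj => by rw [h m (le_of_lt hmj)]; exact h2 m hm hmj,
      by rw [h j le_rfl]; exact h3⟩
  · rintro ⟨h1, h2, h3⟩
    refine ⟨fun m hm hmj => ?_, fun m hm hmj => ?_, ?_⟩
    · have := h1 m hm hmj; rwa [h m hmj] at this
    · have := h2 m hm hmj; rwa [h m (le_of_lt hmj)] at this
    · have := h3; rwa [h j le_rfl] at this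

section Prob

variable [MeasurableSpace Ω] (P : Measure Ω) [IsProbabilityMeasure P]
variable (X : ℕ → Ω → ℤ)

lemma tupleB_measurable (hXmeas : ∀ i, Measurable (X i)) (k j : ℕ) : Measurable (fun ω (i : Fin j) => X (k + i) ω) :=
  measurable_pi_lambda _ fun i => hXmeas _

lemma tupleA_measurable (hXmeas : ∀ i, Measurable (X i)) (k : ℕ) : Measurable (fun ω (i : Fin k) => X i ω) :=
  measurable_pi_lambda _ fun i => hXmeas _

/-- Independence of `Aev` and `Bev`. -/
lemma indep_AB (hXmeas : ∀ i, Measurable (X i)) (hXindep : iIndepFun X P) (x k j : ℕ) :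
    P (Aev X x k ∩ Bev X x k j) = P (Aev X x k) * P (Bev X x k j) := by
  have hST : Disjoint (Finset.range k) (Finset.Ico k (k + j)) := by
    rw [Finset.disjoint_left]
    intro n hn hn'
    rw [Finset.mem_range] at hn
    rw [Finset.mem_Ico] at hn'
    omega
  have hindep0 := hXindep.indepFun_finset (Finset.range k) (Finset.Ico k (k + j)) hST hXmeas
  let ρS : ({n // n ∈ Finset.range k} → ℤ) → (Fin k → ℤ) :=
    fun v i => v ⟨(i : ℕ), Finset.mem_range.mpr i.isLt⟩
  let ρT : ({n // n ∈ Finset.Ico k (k + j)} → ℤ) → (Fin j → ℤ) :=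
    fun v i => v ⟨k + (i : ℕ), Finset.mem_Ico.mpr ⟨Nat.le_add_right _ _, by
      have := i.isLt; omega⟩⟩
  have hρSm : Measurable ρS := measurable_pi_lambda _ fun i => measurable_pi_apply _
  have hρTm : Measurable ρT := measurable_pi_lambda _ fun i => measurable_pi_apply _
  have hindep : IndepFun (fun ω (i : Fin k) => X i ω) (fun ω (i : Fin j) => X (k + i) ω) P :=
    hindep0.comp hρSm hρTm
  rw [Aev_eq_preimage, Bev_eq_preimage]
  exact hindep.measure_inter_preimage_eq_mul _ _ .of_discrete .of_discrete

/-- The probability of the singleton value of the shifted tuple does not depend on the shift. -/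
lemma tuple_singleton (hXindep : iIndepFun X P)
    (hXident : ∀ i, IdentDistrib (X i) (X 0) P P) (j : ℕ) (k : ℕ) (v : Fin j → ℤ) :
    P ((fun ω (i : Fin j) => X (k + i) ω) ⁻¹' {v})
      = ∏ i ∈ Finset.range j, P (X 0 ⁻¹' {if h : i < j then v ⟨i, h⟩ else 0}) := by
  set w : ℕ → ℤ := fun n => if h : n < j then v ⟨n, h⟩ else 0 with hw
  have hmaster := hXindep.measure_inter_preimage_eq_mul
    (S := (Finset.range j).image (fun i => k + i)) (sets := fun n => {w (n - k)})
    (fun i _ => .of_discrete)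
  have hset : (⋂ n ∈ (Finset.range j).image (fun i => k + i), X n ⁻¹' {w (n - k)})
      = (fun ω (i : Fin j) => X (k + i) ω) ⁻¹' {v} := by
    ext ω
    simp only [Set.mem_iInter, Finset.mem_image, Finset.mem_range, Set.mem_preimage,
      Set.mem_singleton_iff]
    constructor
    · intro h
      funext i
      have hi := h (k + (i : ℕ)) ⟨(i : ℕ), i.isLt, rfl⟩
      have hsub : k + (i : ℕ) - k = (i : ℕ) := by omega
      rw [hsub] at hi
      simpa [hw, i.isLt] using hi
    · intro h n hn
      obtain ⟨i, hi, rfl⟩ := hn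
      have hsub : k + i - k = i := by omega
      rw [hsub]
      have : X (k + i) ω = v ⟨i, hi⟩ := by
        have := congrFun h ⟨i, hi⟩
        simpa using this
      rw [this]
      simp [hw, hi]
  rw [hset] at hmaster
  rw [hmaster, Finset.prod_image (fun a _ b _ h => by omega)]
  apply Finset.prod_congr rfl
  intro i hi
  have hsub : k + i - k = i := by omega
  simp only [hsub]
  rw [Finset.mem_range] at hi
  have heq := (hXident (k + i)).measure_mem_eq (s := {w i}) .of_discrete
  rw [heq]

/-- The probability of `Bev` does not depend on the starting index. -/
lemma Bev_shift (hXmeas : ∀ i, Measurable (X i)) (hXindep : iIndepFun X P)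
    (hXident : ∀ i, IdentDistrib (X i) (X 0) P P) (x k j : ℕ) :
    P (Bev X x k j) = P (Bev X x 0 j) := by
  have hmap : P.map (fun ω (i : Fin j) => X (k + i) ω)
      = P.map (fun ω (i : Fin j) => X (0 + i) ω) :=
    Measure.ext_of_singleton fun v => by
      rw [Measure.map_apply (tupleB_measurable X hXmeas k j) (MeasurableSet.of_discrete),
        Measure.map_apply (tupleB_measurable X hXmeas 0 j) (MeasurableSet.of_discrete),
        tuple_singleton P X hXindep hXident j k v, tuple_singleton P X hXindep hXident j 0 v]
  rw [Bev_eq_preimage X x k j, Bev_eq_preimage X x 0 j,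
    ← Measure.map_apply (tupleB_measurable X hXmeas k j) (MeasurableSet.of_discrete),
    ← Measure.map_apply (tupleB_measurable X hXmeas 0 j) (MeasurableSet.of_discrete), hmap]

end Prob

/-- conditionally on `M_τ = x`, the random variables `θ_τ` and `τ - θ_τ`
are independent. -/
theorem theta_and_tau_minus_theta_cond_indep
    {Ω : Type*} [MeasurableSpace Ω] (P : Measure Ω) [IsProbabilityMeasure P]
    (X : ℕ → Ω → ℤ)
    -- `X` are i.i.d. under `P`
    (hXmeas : ∀ i, Measurable (X i))
    (hXindep : iIndepFun X P)
    (hXident : ∀ i, IdentDistrib (X i) (X 0) P P)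
    -- negative drift `E X₁ = -a < 0`
    (a : ℝ) (ha : 0 < a)
    (hXint : Integrable (fun ω => (X 0 ω : ℝ)) P)
    (hmean : ∫ ω, (X 0 ω : ℝ) ∂P = -a)
    -- Cramér condition `E e^{λ X₁} = 1` for some `λ > 0`
    (l : ℝ) (hl : 0 < l)
    (hcramer : ∫ ω, Real.exp (l * (X 0 ω : ℝ)) ∂P = 1) :
    ∀ x : ℕ, 1 ≤ x → P {ω | Mtau X ω = (x : ℤ)} ≠ 0 →
      ∀ k j : ℕ, 1 ≤ k → 1 ≤ j →
        pr P {ω | thetaTau X ω = k ∧ tauN X ω - thetaTau X ω = j ∧ Mtau X ω = (x : ℤ)}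
            / pr P {ω | Mtau X ω = (x : ℤ)}
          = (pr P {ω | thetaTau X ω = k ∧ Mtau X ω = (x : ℤ)}
              / pr P {ω | Mtau X ω = (x : ℤ)})
            * (pr P {ω | tauN X ω - thetaTau X ω = j ∧ Mtau X ω = (x : ℤ)}
              / pr P {ω | Mtau X ω = (x : ℤ)}) := by
  intro x hx hMne k j hk hj
  classical
  set p : ℕ → ENNReal := fun k' => P (Aev X x k') with hp
  set q : ℕ → ENNReal := fun j' => P (Bev X x 0 j') with hq
  set Pt : ENNReal := ∑' k', p (k' + 1) with hPt
  set Qt : ENNReal := ∑' j', q (j' + 1) with hQt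
  -- probability of the elementary events
  have hPE : ∀ k' j', 1 ≤ k' → 1 ≤ j' →
      P {ω | thetaTau X ω = k' ∧ tauN X ω - thetaTau X ω = j' ∧ Mtau X ω = (x : ℤ)}
        = p k' * q j' := by
    intro k' j' hk' hj'
    rw [event_eq X x k' j' hx hk' hj', indep_AB P X hXmeas hXindep x k' j',
      Bev_shift P X hXmeas hXindep hXident x k' j']
  -- measurability of elementary events
  have hEmeas : ∀ k' j', 1 ≤ k' → 1 ≤ j' →
      MeasurableSet {ω | thetaTau X ω = k' ∧ tauN X ω - thetaTau X ω = j'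
        ∧ Mtau X ω = (x : ℤ)} := by
    intro k' j' hk' hj'
    rw [event_eq X x k' j' hx hk' hj', Aev_eq_preimage, Bev_eq_preimage]
    exact ((tupleA_measurable X hXmeas k') .of_discrete).inter
      ((tupleB_measurable X hXmeas k' j') .of_discrete)
  -- decomposition of `{M = x}`
  have hM_eq : {ω | Mtau X ω = (x : ℤ)} = ⋃ (pkj : ℕ × ℕ),
      {ω | thetaTau X ω = pkj.1 + 1 ∧ tauN X ω - thetaTau X ω = pkj.2 + 1
        ∧ Mtau X ω = (x : ℤ)} := by
    ext ω
    simp only [Set.mem_iUnion, Set.mem_setOf_eq]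
    constructor
    · intro hM
      obtain ⟨h1, h2⟩ := Mtau_theta_pos X x hx ω hM
      exact ⟨(thetaTau X ω - 1, tauN X ω - thetaTau X ω - 1), by omega, by omega, hM⟩
    · rintro ⟨_, _, _, h⟩; exact h
  have hθM_eq : {ω | thetaTau X ω = k ∧ Mtau X ω = (x : ℤ)} = ⋃ (j' : ℕ),
      {ω | thetaTau X ω = k ∧ tauN X ω - thetaTau X ω = j' + 1
        ∧ Mtau X ω = (x : ℤ)} := by
    ext ω
    simp only [Set.mem_iUnion, Set.mem_setOf_eq]
    constructor
    · rintro ⟨hθ, hM⟩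
      obtain ⟨h1, h2⟩ := Mtau_theta_pos X x hx ω hM
      exact ⟨tauN X ω - thetaTau X ω - 1, hθ, by omega, hM⟩
    · rintro ⟨_, h1, _, h3⟩; exact ⟨h1, h3⟩
  have hτθM_eq : {ω | tauN X ω - thetaTau X ω = j ∧ Mtau X ω = (x : ℤ)} = ⋃ (k' : ℕ),
      {ω | thetaTau X ω = k' + 1 ∧ tauN X ω - thetaTau X ω = j
        ∧ Mtau X ω = (x : ℤ)} := by
    ext ω
    simp only [Set.mem_iUnion, Set.mem_setOf_eq]
    constructor
    · rintro ⟨hτθ, hM⟩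
      obtain ⟨h1, h2⟩ := Mtau_theta_pos X x hx ω hM
      exact ⟨thetaTau X ω - 1, by omega, hτθ, hM⟩
    · rintro ⟨_, _, h2, h3⟩; exact ⟨h2, h3⟩
  -- the three measure computations
  have hPM : P {ω | Mtau X ω = (x : ℤ)} = Pt * Qt := by
    rw [hM_eq, measure_iUnion ?_ (fun pkj => hEmeas _ _ (by omega) (by omega))]
    · rw [ENNReal.tsum_prod']
      have h1 : ∀ k' : ℕ, (∑' j', P {ω | thetaTau X ω = k' + 1
          ∧ tauN X ω - thetaTau X ω = j' + 1 ∧ Mtau X ω = (x : ℤ)}) = p (k' + 1) * Qt := by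
        intro k'
        rw [tsum_congr (fun j' => hPE (k' + 1) (j' + 1) (by omega) (by omega)),
          ENNReal.tsum_mul_left]
      rw [tsum_congr h1, ENNReal.tsum_mul_right]
    · intro ⟨a1, a2⟩ ⟨b1, b2⟩ hab
      simp only [ne_eq, Prod.mk.injEq, not_and] at hab
      rw [Function.onFun, Set.disjoint_left]
      intro ω h1 h2
      simp only [Set.mem_setOf_eq] at h1 h2
      have : a1 = b1 ∧ a2 = b2 := by omega
      exact hab this.1 this.2
  have hPθ : P {ω | thetaTau X ω = k ∧ Mtau X ω = (x : ℤ)} = p k * Qt := by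
    rw [hθM_eq, measure_iUnion ?_ (fun j' => hEmeas _ _ hk (by omega))]
    · rw [tsum_congr (fun j' => hPE k (j' + 1) hk (by omega)), ENNReal.tsum_mul_left]
    · intro a b hab
      rw [Function.onFun, Set.disjoint_left]
      intro ω h1 h2
      simp only [Set.mem_setOf_eq] at h1 h2
      exact hab (by omega)
  have hPτθ : P {ω | tauN X ω - thetaTau X ω = j ∧ Mtau X ω = (x : ℤ)} = Pt * q j := by
    rw [hτθM_eq, measure_iUnion ?_ (fun k' => hEmeas _ _ (by omega) hj)]
    · rw [tsum_congr (fun k' => hPE (k' + 1) j (by omega) hj), ENNReal.tsum_mul_right]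
    · intro a b hab
      rw [Function.onFun, Set.disjoint_left]
      intro ω h1 h2
      simp only [Set.mem_setOf_eq] at h1 h2
      exact hab (by omega)
  -- nondegeneracy
  have hPQne : Pt * Qt ≠ 0 := by rw [← hPM]; exact hMne
  have hPt0 : Pt ≠ 0 := fun h => hPQne (by rw [h, zero_mul])
  have hQt0 : Qt ≠ 0 := fun h => hPQne (by rw [h, mul_zero])
  have hPQfin : Pt * Qt ≠ ⊤ := by rw [← hPM]; exact measure_ne_top P _
  have hPtT : Pt ≠ ⊤ := fun h => hPQfin (by rw [h, ENNReal.top_mul hQt0])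
  have hQtT : Qt ≠ ⊤ := fun h => hPQfin (by rw [h, ENNReal.mul_top hPt0])
  -- final computation
  simp only [pr]
  rw [hPE k j hk hj, hPM, hPθ, hPτθ, ENNReal.toReal_mul, ENNReal.toReal_mul,
    ENNReal.toReal_mul, ENNReal.toReal_mul]
  have hA : Pt.toReal ≠ 0 := ENNReal.toReal_ne_zero.mpr ⟨hPt0, hPtT⟩
  have hB : Qt.toReal ≠ 0 := ENNReal.toReal_ne_zero.mpr ⟨hQt0, hQtT⟩
  field_simp
end

section
/- One has P(τ = ∞) · E[τ₊] = 1. More generally, the generating-function duality identity (1 − E[z^{τ₊}])(1 − E[z^{τ}; τ < ∞]) = 1 − z holds for all z ∈ [0, 1), and P(τ = ∞)·E[τ₊] = 1 follows by dividing by 1 − z and letting z → 1. -/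
open MeasureTheory ProbabilityTheory Filter Real

variable {Ω : Type*}

open Topology

namespace DualityAux

lemma msAll {α : Type*} [MeasurableSpace α] [MeasurableSingletonClass α] [Countable α]
    (s : Set α) : MeasurableSet s := (Set.to_countable s).measurableSet

variable {Ω : Type*} [MeasurableSpace Ω] (P : Measure Ω) [IsProbabilityMeasure P]
variable (X : ℕ → Ω → ℤ)

/-- Partial sum of a finite vector, with junk `0` beyond the end. -/
def vsum {n : ℕ} (y : Fin n → ℤ) (j : ℕ) : ℤ :=
  ∑ i ∈ Finset.range j, if h : i < n then y ⟨i, h⟩ else 0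

lemma measurable_V (hXmeas : ∀ i, Measurable (X i)) {k : ℕ} (e : Fin k → ℕ) :
    Measurable (fun ω (i : Fin k) => X (e i) ω) :=
  measurable_pi_iff.mpr fun i => hXmeas (e i)

/-- The joint law of any injectively-reindexed finite subfamily is the product of the
common marginal law. -/
lemma law (hXmeas : ∀ i, Measurable (X i))
    (hXindep : iIndepFun X P)
    (hXident : ∀ i, IdentDistrib (X i) (X 0) P P)
    {k : ℕ} (e : Fin k → ℕ) (he : Function.Injective e) :
    P.map (fun ω (i : Fin k) => X (e i) ω)
      = Measure.pi (fun _ : Fin k => P.map (X 0)) := by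
  apply MeasureTheory.Measure.ext_of_singleton
  intro y
  rw [Measure.map_apply (measurable_V X hXmeas e) (msAll _)]
  have hpre : (fun ω (i : Fin k) => X (e i) ω) ⁻¹' {y}
      = ⋂ j ∈ Finset.image e Finset.univ, X j ⁻¹' {z | ∃ i, e i = j ∧ z = y i} := by
    ext ω
    simp only [Set.mem_preimage, Set.mem_singleton_iff, Finset.mem_image, Set.mem_iInter,
      Set.mem_setOf_eq, funext_iff]
    constructor
    · rintro h j ⟨i, -, rfl⟩
      exact ⟨i, rfl, h i⟩
    · intro h i
      obtain ⟨i', hi', hz⟩ := h (e i) ⟨i, Finset.mem_univ i, rfl⟩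
      cases he hi'
      exact hz
  rw [hpre, hXindep.measure_inter_preimage_eq_mul _ (fun i _ => msAll _),
    Finset.prod_image (fun i _ j _ h => he h)]
  have hsing : ∀ i : Fin k, {z | ∃ i', e i' = e i ∧ z = y i'} = {y i} := by
    intro i
    ext z
    simp only [Set.mem_setOf_eq, Set.mem_singleton_iff]
    constructor
    · rintro ⟨i', hi', rfl⟩; cases he hi'; rfl
    · rintro rfl; exact ⟨i, rfl, rfl⟩
  have hmarg : ∀ i : Fin k, P (X (e i) ⁻¹' {y i}) = (P.map (X 0)) {y i} := by
    intro i
    rw [← (hXident (e i)).map_eq, Measure.map_apply (hXmeas (e i)) (msAll _)]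
  rw [← Set.univ_pi_singleton y, Measure.pi_pi]
  exact Finset.prod_congr rfl fun i _ => by rw [hsing i, hmarg i]

lemma cyl (hXmeas : ∀ i, Measurable (X i))
    (hXindep : iIndepFun X P)
    (hXident : ∀ i, IdentDistrib (X i) (X 0) P P)
    {k : ℕ} (e : Fin k → ℕ) (he : Function.Injective e) (A : Set (Fin k → ℤ)) :
    P ((fun ω (i : Fin k) => X (e i) ω) ⁻¹' A)
      = Measure.pi (fun _ : Fin k => P.map (X 0)) A := by
  rw [← law P X hXmeas hXindep hXident e he,
    Measure.map_apply (measurable_V X hXmeas e) (msAll _)]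

end DualityAux

namespace DualityAux

variable {Ω : Type*} [MeasurableSpace Ω] (P : Measure Ω) [IsProbabilityMeasure P]
variable (X : ℕ → Ω → ℤ)

lemma pi_split {k1 k2 : ℕ} (μ : Measure ℤ) [IsProbabilityMeasure μ]
    (A1 : Set (Fin k1 → ℤ)) (A2 : Set (Fin k2 → ℤ)) :
    Measure.pi (fun _ : Fin (k1 + k2) => μ)
      {y | (fun i => y (Fin.castAdd k2 i)) ∈ A1 ∧ (fun i => y (Fin.natAdd k1 i)) ∈ A2}
      = Measure.pi (fun _ : Fin k1 => μ) A1 * Measure.pi (fun _ : Fin k2 => μ) A2 := by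
  set h : (Fin (k1 + k2) → ℤ) → (Fin k1 → ℤ) × (Fin k2 → ℤ) :=
    fun y => (fun i => y (Fin.castAdd k2 i), fun i => y (Fin.natAdd k1 i)) with hh
  have hmeas : Measurable h := by
    apply Measurable.prod <;>
      exact measurable_pi_iff.mpr fun i => measurable_pi_apply _
  have hmap : (Measure.pi (fun _ : Fin (k1 + k2) => μ)).map h
      = (Measure.pi (fun _ : Fin k1 => μ)).prod (Measure.pi (fun _ : Fin k2 => μ)) := by
    apply MeasureTheory.Measure.ext_of_singleton
    rintro ⟨a, b⟩
    rw [Measure.map_apply hmeas (msAll _)]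
    have hpre : h ⁻¹' {(a, b)} = {Fin.append a b} := by
      ext y
      simp only [Set.mem_preimage, Set.mem_singleton_iff, hh, Prod.mk.injEq, funext_iff]
      constructor
      · rintro ⟨h1, h2⟩
        intro j
        refine Fin.addCases (fun i => ?_) (fun i => ?_) j
        · rw [Fin.append_left]; exact h1 i
        · rw [Fin.append_right]; exact h2 i
      · intro hy
        constructor
        · intro i; rw [hy, Fin.append_left]
        · intro i; rw [hy, Fin.append_right]
    rw [hpre, ← Set.singleton_prod_singleton, Measure.prod_prod,
      ← Set.univ_pi_singleton, ← Set.univ_pi_singleton, ← Set.univ_pi_singleton,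
      Measure.pi_pi, Measure.pi_pi, Measure.pi_pi, Fin.prod_univ_add]
    congr 1
    · exact Finset.prod_congr rfl fun i _ => by rw [Fin.append_left]
    · exact Finset.prod_congr rfl fun i _ => by rw [Fin.append_right]
  have : {y : Fin (k1 + k2) → ℤ |
      (fun i => y (Fin.castAdd k2 i)) ∈ A1 ∧ (fun i => y (Fin.natAdd k1 i)) ∈ A2}
      = h ⁻¹' (A1 ×ˢ A2) := rfl
  rw [this, ← Measure.map_apply hmeas (msAll _), hmap, Measure.prod_prod]

/-- Independent splitting for events depending on disjoint blocks of increments. -/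
lemma split (hXmeas : ∀ i, Measurable (X i))
    (hXindep : iIndepFun X P)
    (hXident : ∀ i, IdentDistrib (X i) (X 0) P P)
    {k1 k2 : ℕ} (e : Fin (k1 + k2) → ℕ) (he : Function.Injective e)
    (e1 : Fin k1 → ℕ) (e2 : Fin k2 → ℕ)
    (he1 : ∀ i, e (Fin.castAdd k2 i) = e1 i) (he2 : ∀ i, e (Fin.natAdd k1 i) = e2 i)
    (A1 : Set (Fin k1 → ℤ)) (A2 : Set (Fin k2 → ℤ)) :
    P ((fun ω (i : Fin k1) => X (e1 i) ω) ⁻¹' A1 ∩ (fun ω (i : Fin k2) => X (e2 i) ω) ⁻¹' A2)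
      = P ((fun ω (i : Fin k1) => X (e1 i) ω) ⁻¹' A1)
        * P ((fun ω (i : Fin k2) => X (e2 i) ω) ⁻¹' A2) := by
  have he1' : Function.Injective e1 := by
    intro i j hij
    have := he (a₁ := Fin.castAdd k2 i) (a₂ := Fin.castAdd k2 j) (by rw [he1, he1, hij])
    exact Fin.castAdd_injective _ _ this
  have he2' : Function.Injective e2 := by
    intro i j hij
    have := he (a₁ := Fin.natAdd k1 i) (a₂ := Fin.natAdd k1 j) (by rw [he2, he2, hij])
    have hval : k1 + (i : ℕ) = k1 + (j : ℕ) := congrArg Fin.val this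
    exact Fin.ext (by omega)
  have hint : (fun ω (i : Fin k1) => X (e1 i) ω) ⁻¹' A1
        ∩ (fun ω (i : Fin k2) => X (e2 i) ω) ⁻¹' A2
      = (fun ω (i : Fin (k1 + k2)) => X (e i) ω) ⁻¹'
        {y | (fun i => y (Fin.castAdd k2 i)) ∈ A1 ∧ (fun i => y (Fin.natAdd k1 i)) ∈ A2} := by
    ext ω
    simp only [Set.mem_inter_iff, Set.mem_preimage, Set.mem_setOf_eq]
    constructor
    · rintro ⟨h1, h2⟩
      constructor
      · convert h1 using 2 with i; rw [he1]
      · convert h2 using 2 with i; rw [he2]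
    · rintro ⟨h1, h2⟩
      constructor
      · convert h1 using 2 with i; rw [he1]
      · convert h2 using 2 with i; rw [he2]
  haveI : IsProbabilityMeasure (P.map (X 0)) := Measure.isProbabilityMeasure_map (hXmeas 0).aemeasurable
  rw [hint, cyl P X hXmeas hXindep hXident e he, cyl P X hXmeas hXindep hXident e1 he1',
    cyl P X hXmeas hXindep hXident e2 he2', pi_split]

end DualityAux

namespace DualityAux

section Walk

variable {Ω : Type*} [MeasurableSpace Ω] (P : Measure Ω) [IsProbabilityMeasure P]
variable (X : ℕ → Ω → ℤ)

/-- canonical sets in `Fin n → ℤ` -/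
def Aq (n : ℕ) : Set (Fin n → ℤ) := {y | ∀ j, 1 ≤ j → j ≤ n → vsum y j ≤ 0}
def Ar (n : ℕ) : Set (Fin n → ℤ) := {y | ∀ k, k < n → vsum y n ≤ vsum y k}
def ABset (m : ℕ) : Set (Fin (m + 1) → ℤ) :=
  {y | (∀ j, 1 ≤ j → j ≤ m → 0 < vsum y j) ∧ vsum y (m + 1) ≤ 0}
def Apos (n : ℕ) : Set (Fin n → ℤ) := {y | ∀ j, 1 ≤ j → j ≤ n → 0 < vsum y j}

/-- events in `Ω` -/
def Qev (n : ℕ) : Set Ω := {ω | ∀ j, 1 ≤ j → j ≤ n → Swalk X j ω ≤ 0}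
def Qpev (n : ℕ) : Set Ω := {ω | ∀ j, 1 ≤ j → j ≤ n → 0 < Swalk X j ω}
def Bev (n : ℕ) : Set Ω :=
  {ω | (∀ j, 1 ≤ j → j ≤ n → 0 < Swalk X j ω) ∧ Swalk X (n + 1) ω ≤ 0}
def Aev (n : ℕ) : Set Ω :=
  {ω | (∀ j, 1 ≤ j → j ≤ n → Swalk X j ω ≤ 0) ∧ 0 < Swalk X (n + 1) ω}
def Rev (n : ℕ) : Set Ω := {ω | ∀ k, k < n → Swalk X n ω ≤ Swalk X k ω}

lemma vsum_eq {n : ℕ} (g : ℕ → ℤ) (j : ℕ) (hj : j ≤ n) :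
    vsum (fun i : Fin n => g (i : ℕ)) j = ∑ t ∈ Finset.range j, g t := by
  unfold vsum
  refine Finset.sum_congr rfl fun i hi => ?_
  rw [dif_pos (lt_of_lt_of_le (Finset.mem_range.mp hi) hj)]

lemma vsum_walk (ω : Ω) {n j : ℕ} (hj : j ≤ n) :
    vsum (fun i : Fin n => X (i : ℕ) ω) j = Swalk X j ω :=
  vsum_eq (fun t => X t ω) j hj

lemma swalk_sub (ω : Ω) {m k : ℕ} (h : m ≤ k) :
    Swalk X k ω - Swalk X m ω = ∑ t ∈ Finset.range (k - m), X (m + t) ω := by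
  rw [Swalk, Swalk, ← Finset.sum_Ico_eq_sub _ h, Finset.sum_Ico_eq_sum_range]

lemma vsum_shift (ω : Ω) {m d j : ℕ} (hj : j ≤ d) :
    vsum (fun i : Fin d => X (m + 1 + (i : ℕ)) ω) j
      = Swalk X (m + 1 + j) ω - Swalk X (m + 1) ω := by
  rw [vsum_eq (fun t => X (m + 1 + t) ω) j hj, swalk_sub X ω (by omega : m + 1 ≤ m + 1 + j)]
  simp

lemma vsum_rev (ω : Ω) {n j : ℕ} (hj : j ≤ n) :
    vsum (fun i : Fin n => X (n - 1 - (i : ℕ)) ω) j = Swalk X n ω - Swalk X (n - j) ω := by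
  rw [vsum_eq (fun t => X (n - 1 - t) ω) j hj, swalk_sub X ω (by omega : n - j ≤ n)]
  have hnj : n - (n - j) = j := by omega
  rw [hnj]
  rw [← Finset.sum_range_reflect (fun t => X (n - j + t) ω) j]
  refine Finset.sum_congr rfl fun t ht => ?_
  have ht' : t < j := Finset.mem_range.mp ht
  congr 1
  omega

variable (hXmeas : ∀ i, Measurable (X i))
  (hXindep : iIndepFun X P)
  (hXident : ∀ i, IdentDistrib (X i) (X 0) P P)

include hXmeas hXindep hXident

set_option linter.unusedSectionVars false

/-- law of Qev -/
lemma hQ (n : ℕ) : P (Qev X n) = Measure.pi (fun _ : Fin n => P.map (X 0)) (Aq n) := by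
  have hset : Qev X n = (fun ω (i : Fin n) => X (i : ℕ) ω) ⁻¹' Aq n := by
    ext ω
    simp only [Qev, Aq, Set.mem_setOf_eq, Set.mem_preimage]
    exact ⟨fun h j h1 h2 => by rw [vsum_walk X ω h2]; exact h j h1 h2,
      fun h j h1 h2 => by rw [← vsum_walk X ω h2]; exact h j h1 h2⟩
  rw [hset, cyl P X hXmeas hXindep hXident _ Fin.val_injective]

lemma hQp (n : ℕ) : P (Qpev X n) = Measure.pi (fun _ : Fin n => P.map (X 0)) (Apos n) := by
  have hset : Qpev X n = (fun ω (i : Fin n) => X (i : ℕ) ω) ⁻¹' Apos n := by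
    ext ω
    simp only [Qpev, Apos, Set.mem_setOf_eq, Set.mem_preimage]
    exact ⟨fun h j h1 h2 => by rw [vsum_walk X ω h2]; exact h j h1 h2,
      fun h j h1 h2 => by rw [← vsum_walk X ω h2]; exact h j h1 h2⟩
  rw [hset, cyl P X hXmeas hXindep hXident _ Fin.val_injective]

/-- law of Rev via the identity embedding -/
lemma hR_id (n : ℕ) : P (Rev X n) = Measure.pi (fun _ : Fin n => P.map (X 0)) (Ar n) := by
  have hset : Rev X n = (fun ω (i : Fin n) => X (i : ℕ) ω) ⁻¹' Ar n := by
    ext ω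
    simp only [Rev, Ar, Set.mem_setOf_eq, Set.mem_preimage]
    constructor
    · intro h k hk
      rw [vsum_walk X ω le_rfl, vsum_walk X ω hk.le]
      exact h k hk
    · intro h k hk
      have := h k hk
      rwa [vsum_walk X ω le_rfl, vsum_walk X ω hk.le] at this
  rw [hset, cyl P X hXmeas hXindep hXident _ Fin.val_injective]

/-- law of Rev via the reversal embedding: it equals that of Qev -/
lemma hR_rev (n : ℕ) : P (Rev X n) = Measure.pi (fun _ : Fin n => P.map (X 0)) (Aq n) := by
  have hset : Rev X n = (fun ω (i : Fin n) => X (n - 1 - (i : ℕ)) ω) ⁻¹' Aq n := by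
    ext ω
    simp only [Rev, Aq, Set.mem_setOf_eq, Set.mem_preimage]
    constructor
    · intro h j h1 h2
      rw [vsum_rev X ω h2, sub_nonpos]
      exact h (n - j) (by omega)
    · intro h k hk
      have := h (n - k) (by omega) (by omega)
      rw [vsum_rev X ω (by omega)] at this
      have hnk : n - (n - k) = k := by omega
      rw [hnk] at this
      linarith
  have hinj : Function.Injective (fun i : Fin n => n - 1 - (i : ℕ)) := by
    intro i j hij
    have hi := i.isLt
    have hj := j.isLt
    simp only at hij
    exact Fin.ext (by omega)
  rw [hset, cyl P X hXmeas hXindep hXident _ hinj]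

lemma R_eq_Q (n : ℕ) : P (Rev X n) = P (Qev X n) := by
  rw [hR_rev P X hXmeas hXindep hXident n, ← hQ P X hXmeas hXindep hXident n]

end Walk

end DualityAux

namespace DualityAux

section Renewal

set_option linter.unusedSectionVars false

variable {Ω : Type*} [MeasurableSpace Ω] (P : Measure Ω) [IsProbabilityMeasure P]
variable (X : ℕ → Ω → ℤ)

/-- the event that the walk, looked at from time `m+1` over `d` more steps, finishes
weakly below all intermediate values -/
def Rsh (m d : ℕ) : Set Ω :=
  {ω | ∀ k, m + 1 ≤ k → k < m + 1 + d → Swalk X (m + 1 + d) ω ≤ Swalk X k ω}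

lemma swalk_zero (ω : Ω) : Swalk X 0 ω = 0 := by simp [Swalk]

lemma hBev_set (m : ℕ) :
    Bev X m = (fun ω (i : Fin (m + 1)) => X (i : ℕ) ω) ⁻¹' ABset m := by
  ext ω
  simp only [Bev, ABset, Set.mem_setOf_eq, Set.mem_preimage]
  constructor
  · rintro ⟨h1, h2⟩
    exact ⟨fun j hj1 hj2 => by rw [vsum_walk X ω (by omega)]; exact h1 j hj1 hj2,
      by rw [vsum_walk X ω le_rfl]; exact h2⟩
  · rintro ⟨h1, h2⟩
    refine ⟨fun j hj1 hj2 => ?_, ?_⟩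
    · have := h1 j hj1 hj2; rwa [vsum_walk X ω (by omega)] at this
    · rwa [vsum_walk X ω le_rfl] at h2

lemma hRsh_set (m d : ℕ) :
    Rsh X m d = (fun ω (i : Fin d) => X (m + 1 + (i : ℕ)) ω) ⁻¹' Ar d := by
  ext ω
  simp only [Rsh, Ar, Set.mem_setOf_eq, Set.mem_preimage]
  constructor
  · intro h k' hk'
    rw [vsum_shift X ω le_rfl, vsum_shift X ω hk'.le, sub_le_sub_iff_right]
    exact h (m + 1 + k') (by omega) (by omega)
  · intro h k hk1 hk2
    have := h (k - (m + 1)) (by omega)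
    rw [vsum_shift X ω le_rfl, vsum_shift X ω (by omega : k - (m+1) ≤ d),
      sub_le_sub_iff_right] at this
    have hk : m + 1 + (k - (m + 1)) = k := by omega
    rwa [hk] at this

variable (hXmeas : ∀ i, Measurable (X i))
  (hXindep : iIndepFun X P)
  (hXident : ∀ i, IdentDistrib (X i) (X 0) P P)

include hXmeas hXindep hXident

lemma hRsh_law (m d : ℕ) : P (Rsh X m d) = P (Qev X d) := by
  have hinj : Function.Injective (fun i : Fin d => m + 1 + (i : ℕ)) := by
    intro i j hij
    simp only at hij
    exact Fin.ext (by omega)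
  rw [hRsh_set, cyl P X hXmeas hXindep hXident _ hinj,
    ← hR_id P X hXmeas hXindep hXident d, R_eq_Q P X hXmeas hXindep hXident d]

lemma hTm (m d : ℕ) :
    P (Bev X m ∩ Rsh X m d) = P (Bev X m) * P (Qev X d) := by
  have h := split P X hXmeas hXindep hXident (k1 := m + 1) (k2 := d)
    (fun i => (i : ℕ)) Fin.val_injective
    (fun i => (i : ℕ)) (fun i => m + 1 + (i : ℕ))
    (fun i => by simp) (fun i => by simp)
    (ABset m) (Ar d)
  rw [hBev_set, hRsh_set, h, ← hBev_set, ← hRsh_set, hRsh_law P X hXmeas hXindep hXident]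

lemma measurable_Bev (m : ℕ) : MeasurableSet (Bev X m) := by
  rw [hBev_set]; exact measurable_V X hXmeas _ (msAll _)

lemma measurable_Rsh (m d : ℕ) : MeasurableSet (Rsh X m d) := by
  rw [hRsh_set]; exact measurable_V X hXmeas _ (msAll _)

omit hXindep hXident

lemma measurable_Qev (n : ℕ) : MeasurableSet (Qev X n) := by
  have hset : Qev X n = (fun ω (i : Fin n) => X (i : ℕ) ω) ⁻¹' Aq n := by
    ext ω
    simp only [Qev, Aq, Set.mem_setOf_eq, Set.mem_preimage]
    exact ⟨fun h j h1 h2 => by rw [vsum_walk X ω h2]; exact h j h1 h2,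
      fun h j h1 h2 => by rw [← vsum_walk X ω h2]; exact h j h1 h2⟩
  rw [hset]; exact measurable_V X hXmeas _ (msAll _)

lemma measurable_Qpev (n : ℕ) : MeasurableSet (Qpev X n) := by
  have hset : Qpev X n = (fun ω (i : Fin n) => X (i : ℕ) ω) ⁻¹' Apos n := by
    ext ω
    simp only [Qpev, Apos, Set.mem_setOf_eq, Set.mem_preimage]
    exact ⟨fun h j h1 h2 => by rw [vsum_walk X ω h2]; exact h j h1 h2,
      fun h j h1 h2 => by rw [← vsum_walk X ω h2]; exact h j h1 h2⟩
  rw [hset]; exact measurable_V X hXmeas _ (msAll _)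

include hXindep hXident

/-- cover of the reversal event by the first-descent decomposition -/
lemma hcover (n : ℕ) :
    Rev X (n + 1) = ⋃ m ∈ Finset.range (n + 1), (Bev X m ∩ Rsh X m (n - m)) := by
  ext ω
  simp only [Rev, Set.mem_setOf_eq, Set.mem_iUnion, Finset.mem_range, Set.mem_inter_iff,
    Bev, Rsh, exists_prop]
  constructor
  · intro h
    have hS0 : Swalk X (n + 1) ω ≤ 0 := by
      have := h 0 (by omega)
      rwa [swalk_zero] at this
    have hex : ∃ j, 1 ≤ j ∧ Swalk X j ω ≤ 0 := ⟨n + 1, by omega, hS0⟩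
    classical
    set j0 := Nat.find hex with hj0def
    obtain ⟨hj01, hj0le⟩ := Nat.find_spec hex
    have hj0min : ∀ j, j < j0 → ¬(1 ≤ j ∧ Swalk X j ω ≤ 0) := fun j hj => Nat.find_min hex hj
    have hj0n : j0 ≤ n + 1 := Nat.find_min' hex ⟨by omega, hS0⟩
    refine ⟨j0 - 1, by omega, ⟨⟨fun j hj1 hj2 => ?_, ?_⟩, fun k hk1 hk2 => ?_⟩⟩
    · by_contra hle
      exact hj0min j (by omega) ⟨hj1, by omega⟩
    · have : j0 - 1 + 1 = j0 := by omega
      rw [this]; exact hj0le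
    · have heq : j0 - 1 + 1 + (n - (j0 - 1)) = n + 1 := by omega
      rw [heq]
      rw [heq] at hk2
      exact h k (by omega)
  · rintro ⟨m, hm, ⟨h1, h2⟩, h3⟩
    have heq : m + 1 + (n - m) = n + 1 := by omega
    rw [heq] at h3
    have hSn1 : Swalk X (n + 1) ω ≤ 0 := by
      rcases Nat.lt_or_ge m n with hlt | hge
      · exact le_trans (h3 (m + 1) le_rfl (by omega)) h2
      · have : m = n := by omega
        subst this
        exact h2
    intro k hk
    rcases Nat.eq_zero_or_pos k with rfl | hk1
    · rwa [swalk_zero]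
    rcases Nat.lt_or_ge m k with hmk | hkm
    · exact h3 k (by omega) (by omega)
    · exact le_trans hSn1 (le_of_lt (h1 k hk1 hkm))

lemma renewalE (n : ℕ) :
    P (Qev X (n + 1)) = ∑ m ∈ Finset.range (n + 1), P (Bev X m) * P (Qev X (n - m)) := by
  rw [← R_eq_Q P X hXmeas hXindep hXident (n + 1), hcover P X hXmeas hXindep hXident n]
  rw [measure_biUnion_finset ?hd ?hm]
  · exact Finset.sum_congr rfl fun m _ => hTm P X hXmeas hXindep hXident m (n - m)
  case hd =>
    intro m hm m' hm' hne
    refine Set.disjoint_left.mpr ?_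
    rintro ω ⟨⟨hB1, hB2⟩, -⟩ ⟨⟨hB1', hB2'⟩, -⟩
    rcases Nat.lt_or_ge m m' with h | h
    · exact absurd hB2 (not_le.mpr (hB1' (m + 1) (by omega) (by omega)))
    · have h' : m' < m := by omega
      exact absurd hB2' (not_le.mpr (hB1 (m' + 1) (by omega) (by omega)))
  case hm =>
    intro m _
    exact (measurable_Bev P X hXmeas hXindep hXident m).inter
      (measurable_Rsh P X hXmeas hXindep hXident m _)

end Renewal

end DualityAux

namespace DualityAux

section Analytic

set_option linter.unusedSectionVars false
set_option maxHeartbeats 1000000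

variable {Ω : Type*} [MeasurableSpace Ω] (P : Measure Ω) [IsProbabilityMeasure P]
variable (X : ℕ → Ω → ℤ)

lemma pr_nonneg (E : Set Ω) : 0 ≤ pr P E := ENNReal.toReal_nonneg

lemma pr_le_one (E : Set Ω) : pr P E ≤ 1 := by
  have h : P E ≤ 1 := prob_le_one
  have h2 := ENNReal.toReal_mono ENNReal.one_ne_top h
  simpa [pr] using h2

lemma q_zero : pr P (Qev X 0) = 1 := by
  have : Qev X 0 = Set.univ := by
    ext ω; simp only [Qev, Set.mem_setOf_eq, Set.mem_univ, iff_true]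
    intro j h1 h2; omega
  rw [pr, this, measure_univ]; simp

lemma measurable_Aev (n : ℕ) (hXmeas : ∀ i, Measurable (X i)) :
    MeasurableSet (Aev X n) := by
  have hset : Aev X n = (fun ω (i : Fin (n + 1)) => X (i : ℕ) ω) ⁻¹'
      {y : Fin (n + 1) → ℤ | (∀ j, 1 ≤ j → j ≤ n → vsum y j ≤ 0) ∧ 0 < vsum y (n + 1)} := by
    ext ω
    simp only [Aev, Set.mem_setOf_eq, Set.mem_preimage]
    constructor
    · rintro ⟨h1, h2⟩
      exact ⟨fun j hj1 hj2 => by rw [vsum_walk X ω (by omega)]; exact h1 j hj1 hj2,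
        by rw [vsum_walk X ω le_rfl]; exact h2⟩
    · rintro ⟨h1, h2⟩
      refine ⟨fun j hj1 hj2 => ?_, ?_⟩
      · have := h1 j hj1 hj2; rwa [vsum_walk X ω (by omega)] at this
      · rwa [vsum_walk X ω le_rfl] at h2
  rw [hset]; exact measurable_V X hXmeas _ (msAll _)

/-- `P(τ₊ > n) = P(τ₊ > n+1) + P(τ₊ = n+1)`. -/
lemma q_succ_add (n : ℕ) (hXmeas : ∀ i, Measurable (X i)) :
    pr P (Qev X n) = pr P (Qev X (n + 1)) + pr P (Aev X n) := by
  have hsplit : Qev X n = Qev X (n + 1) ∪ Aev X n := by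
    ext ω
    simp only [Qev, Aev, Set.mem_setOf_eq, Set.mem_union]
    constructor
    · intro h
      rcases le_or_gt (Swalk X (n + 1) ω) 0 with hle | hgt
      · left
        intro j hj1 hj2
        rcases Nat.lt_or_ge j (n + 1) with hj | hj
        · exact h j hj1 (by omega)
        · have : j = n + 1 := by omega
          subst this; exact hle
      · right; exact ⟨h, hgt⟩
    · rintro (h | ⟨h1, h2⟩)
      · exact fun j hj1 hj2 => h j hj1 (by omega)
      · exact h1
  have hdisj : Disjoint (Qev X (n + 1)) (Aev X n) := by
    refine Set.disjoint_left.mpr ?_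
    rintro ω h1 ⟨-, h3⟩
    exact absurd (h1 (n + 1) (by omega) le_rfl) (not_le.mpr h3)
  have hu := measure_union (μ := P) hdisj (measurable_Aev X n hXmeas)
  rw [pr, hsplit, hu, pr, pr, ENNReal.toReal_add (measure_ne_top P _) (measure_ne_top P _)]

/-- the renewal identity, in real numbers -/
lemma renewalR (n : ℕ)
    (hXmeas : ∀ i, Measurable (X i))
    (hXindep : iIndepFun X P)
    (hXident : ∀ i, IdentDistrib (X i) (X 0) P P) :
    pr P (Qev X (n + 1))
      = ∑ m ∈ Finset.range (n + 1), pr P (Bev X m) * pr P (Qev X (n - m)) := by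
  rw [pr, renewalE P X hXmeas hXindep hXident n, ENNReal.toReal_sum
    (fun m _ => ENNReal.mul_ne_top (measure_ne_top P _) (measure_ne_top P _))]
  exact Finset.sum_congr rfl fun m _ => ENNReal.toReal_mul

lemma sum_zq (z : ℝ) (hz0 : 0 ≤ z) (hz1 : z < 1)
    (c : ℕ → ℝ) (hc0 : ∀ n, 0 ≤ c n) (hc1 : ∀ n, c n ≤ 1) (k : ℕ) :
    Summable (fun n => z ^ (n + k) * c n) := by
  refine Summable.of_nonneg_of_le (fun n => mul_nonneg (pow_nonneg hz0 _) (hc0 n))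
    (fun n => ?_) (((summable_geometric_of_lt_one hz0 hz1).mul_left (z ^ k)).congr
      (fun n => show z ^ k * z ^ n = z ^ (n + k) by ring))
  calc z ^ (n + k) * c n ≤ z ^ (n + k) * 1 :=
        mul_le_mul_of_nonneg_left (hc1 n) (pow_nonneg hz0 _)
    _ = z ^ (n + k) := mul_one _

/-- the key identity `f(z)·(1 - g(z)) = 1`. -/
lemma core_identity (z : ℝ) (hz0 : 0 ≤ z) (hz1 : z < 1)
    (hXmeas : ∀ i, Measurable (X i))
    (hXindep : iIndepFun X P)
    (hXident : ∀ i, IdentDistrib (X i) (X 0) P P) :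
    (∑' n, z ^ n * pr P (Qev X n)) * (1 - ∑' n, z ^ (n + 1) * pr P (Bev X n)) = 1 := by
  set q : ℕ → ℝ := fun n => pr P (Qev X n) with hq
  set Bv : ℕ → ℝ := fun n => pr P (Bev X n) with hBv
  have sumq : Summable (fun n => z ^ n * q n) := by
    have := sum_zq z hz0 hz1 q (fun n => pr_nonneg P _) (fun n => pr_le_one P _) 0
    simpa using this
  have sumB : Summable (fun n => z ^ (n + 1) * Bv n) :=
    sum_zq z hz0 hz1 Bv (fun n => pr_nonneg P _) (fun n => pr_le_one P _) 1
  have hcauchy : (∑' n, z ^ n * q n) * (∑' n, z ^ (n + 1) * Bv n)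
      = ∑' n, ∑ kl ∈ Finset.HasAntidiagonal.antidiagonal n, (z ^ kl.1 * q kl.1) * (z ^ (kl.2 + 1) * Bv kl.2) := by
    apply tsum_mul_tsum_eq_tsum_sum_antidiagonal_of_summable_norm
    · exact sumq.congr (fun n => (Real.norm_of_nonneg
        (mul_nonneg (pow_nonneg hz0 _) (pr_nonneg P _))).symm)
    · exact sumB.congr (fun n => (Real.norm_of_nonneg
        (mul_nonneg (pow_nonneg hz0 _) (pr_nonneg P _))).symm)
  have hinner : ∀ n, (∑ kl ∈ Finset.HasAntidiagonal.antidiagonal n,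
      (z ^ kl.1 * q kl.1) * (z ^ (kl.2 + 1) * Bv kl.2)) = z ^ (n + 1) * q (n + 1) := by
    intro n
    have h1 : ∀ kl ∈ Finset.HasAntidiagonal.antidiagonal n,
        (z ^ kl.1 * q kl.1) * (z ^ (kl.2 + 1) * Bv kl.2) = z ^ (n + 1) * (q kl.1 * Bv kl.2) := by
      intro kl hkl
      have hs : kl.1 + kl.2 = n := Finset.HasAntidiagonal.mem_antidiagonal.mp hkl
      rw [← hs]; ring
    rw [Finset.sum_congr rfl h1, ← Finset.mul_sum]
    congr 1
    have hrenew : q (n + 1) = ∑ m ∈ Finset.range (n + 1), Bv m * q (n - m) :=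
      renewalR P X n hXmeas hXindep hXident
    rw [Finset.Nat.sum_antidiagonal_eq_sum_range_succ (fun k m => q k * Bv m), hrenew]
    have hrefl : ∑ k ∈ Finset.range (n + 1), q k * Bv (n - k)
        = ∑ k ∈ Finset.range (n + 1), (fun m => Bv m * q (n - m)) (n + 1 - 1 - k) := by
      refine Finset.sum_congr rfl fun k hk => ?_
      have hk'' : k < n + 1 := Finset.mem_range.mp hk
      simp only
      rw [show n + 1 - 1 - k = n - k from by omega, show n - (n - k) = k from by omega]
      ring
    simp only [Nat.succ_eq_add_one]
    rw [hrefl]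
    exact Finset.sum_range_reflect (fun m => Bv m * q (n - m)) (n + 1)
  have hshift : Summable (fun n => z ^ (n + 1) * q (n + 1)) :=
    (summable_nat_add_iff 1).mpr sumq
  have hfm1 : ∑' n, z ^ (n + 1) * q (n + 1) = (∑' n, z ^ n * q n) - 1 := by
    have h0 := Summable.tsum_eq_zero_add sumq
    rw [pow_zero, one_mul] at h0
    have hq0 : q 0 = 1 := q_zero P X
    rw [hq0] at h0
    linarith
  have hfg : (∑' n, z ^ n * q n) * (∑' n, z ^ (n + 1) * Bv n)
      = (∑' n, z ^ n * q n) - 1 := by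
    rw [hcauchy, tsum_congr hinner, hfm1]
  rw [mul_one_sub, hfg]
  ring

/-- Part 1 of the theorem. -/
lemma part1 (z : ℝ) (hz0 : 0 ≤ z) (hz1 : z < 1)
    (hXmeas : ∀ i, Measurable (X i))
    (hXindep : iIndepFun X P)
    (hXident : ∀ i, IdentDistrib (X i) (X 0) P P) :
    (1 - ∑' n, z ^ (n + 1) * pr P (Aev X n))
      * (1 - ∑' n, z ^ (n + 1) * pr P (Bev X n)) = 1 - z := by
  set q : ℕ → ℝ := fun n => pr P (Qev X n) with hq
  have sumq : Summable (fun n => z ^ n * q n) := by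
    have := sum_zq z hz0 hz1 q (fun n => pr_nonneg P _) (fun n => pr_le_one P _) 0
    simpa using this
  have hshift : Summable (fun n => z ^ (n + 1) * q (n + 1)) :=
    (summable_nat_add_iff 1).mpr sumq
  have hfm1 : ∑' n, z ^ (n + 1) * q (n + 1) = (∑' n, z ^ n * q n) - 1 := by
    have h0 := Summable.tsum_eq_zero_add sumq
    rw [pow_zero, one_mul] at h0
    have hq0 : q 0 = 1 := q_zero P X
    rw [hq0] at h0
    linarith
  have hA : ∀ n, pr P (Aev X n) = q n - q (n + 1) := by
    intro n
    have := q_succ_add P X n hXmeas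
    simp only [hq]
    linarith
  have h1 : ∑' n, z ^ (n + 1) * pr P (Aev X n)
      = z * (∑' n, z ^ n * q n) - ((∑' n, z ^ n * q n) - 1) := by
    have hterm : ∀ n, z ^ (n + 1) * pr P (Aev X n)
        = z * (z ^ n * q n) - z ^ (n + 1) * q (n + 1) := by
      intro n; rw [hA n]; ring
    rw [tsum_congr hterm, Summable.tsum_sub (sumq.mul_left z) hshift, tsum_mul_left, hfm1]
  have hfactor : 1 - ∑' n, z ^ (n + 1) * pr P (Aev X n) = (1 - z) * (∑' n, z ^ n * q n) := by
    rw [h1]; ring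
  rw [hfactor, mul_assoc, core_identity P X z hz0 hz1 hXmeas hXindep hXident, mul_one]

end Analytic

end DualityAux

namespace DualityAux

section Limit

set_option linter.unusedSectionVars false
set_option maxHeartbeats 1000000

variable {Ω : Type*} [MeasurableSpace Ω] (P : Measure Ω) [IsProbabilityMeasure P]
variable (X : ℕ → Ω → ℤ)

def pEvent : Set Ω := {ω | ∀ j, 1 ≤ j → 0 < Swalk X j ω}
def Fkn (k n : ℕ) : Set Ω := {ω | ∀ j, 1 ≤ j → j ≤ n → 0 < Swalk X (k + j) ω - Swalk X k ω}
def Fev (k : ℕ) : Set Ω := {ω | ∀ j, 1 ≤ j → 0 < Swalk X (k + j) ω - Swalk X k ω}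

lemma vsum_shiftb (ω : Ω) {b d j : ℕ} (hj : j ≤ d) :
    vsum (fun i : Fin d => X (b + (i : ℕ)) ω) j = Swalk X (b + j) ω - Swalk X b ω := by
  rw [vsum_eq (fun t => X (b + t) ω) j hj, swalk_sub X ω (by omega : b ≤ b + j)]
  simp

lemma hFkn_set (k n : ℕ) :
    Fkn X k n = (fun ω (i : Fin n) => X (k + (i : ℕ)) ω) ⁻¹' Apos n := by
  ext ω
  simp only [Fkn, Apos, Set.mem_setOf_eq, Set.mem_preimage]
  constructor
  · intro h j hj1 hj2
    rw [vsum_shiftb X ω hj2, sub_pos]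
    have := h j hj1 hj2
    linarith
  · intro h j hj1 hj2
    have := h j hj1 hj2
    rw [vsum_shiftb X ω hj2, sub_pos] at this
    linarith

variable (hXmeas : ∀ i, Measurable (X i))
  (hXindep : iIndepFun X P)
  (hXident : ∀ i, IdentDistrib (X i) (X 0) P P)

include hXmeas hXindep hXident

lemma hFkn_law (k n : ℕ) : P (Fkn X k n) = P (Qpev X n) := by
  have hinj : Function.Injective (fun i : Fin n => k + (i : ℕ)) := by
    intro i j hij
    simp only at hij
    exact Fin.ext (by omega)
  rw [hFkn_set, cyl P X hXmeas hXindep hXident _ hinj, hQp P X hXmeas hXindep hXident n]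

omit hXindep hXident

lemma measurable_Fkn (k n : ℕ) : MeasurableSet (Fkn X k n) := by
  rw [hFkn_set]; exact measurable_V X hXmeas _ (msAll _)

lemma measurable_pEvent : MeasurableSet (pEvent X) := by
  have h : pEvent X = ⋂ n, Qpev X n := by
    ext ω
    simp only [pEvent, Qpev, Set.mem_setOf_eq, Set.mem_iInter]
    exact ⟨fun h n j hj1 hj2 => h j hj1, fun h j hj1 => h j j hj1 le_rfl⟩
  rw [h]
  exact MeasurableSet.iInter fun n => measurable_Qpev X hXmeas n

include hXindep hXident

lemma hFev_law (k : ℕ) : P (Fev X k) = P (pEvent X) := by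
  have hFeq : Fev X k = ⋂ n, Fkn X k n := by
    ext ω
    simp only [Fev, Fkn, Set.mem_setOf_eq, Set.mem_iInter]
    exact ⟨fun h n j hj1 _ => h j hj1, fun h j hj1 => h j j hj1 le_rfl⟩
  have hPeq : pEvent X = ⋂ n, Qpev X n := by
    ext ω
    simp only [pEvent, Qpev, Set.mem_setOf_eq, Set.mem_iInter]
    exact ⟨fun h n j hj1 hj2 => h j hj1, fun h j hj1 => h j j hj1 le_rfl⟩
  have t1 : Tendsto (fun n => P (Fkn X k n)) atTop (𝓝 (P (⋂ n, Fkn X k n))) :=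
    tendsto_measure_iInter_atTop
      (fun n => (measurable_Fkn X hXmeas k n).nullMeasurableSet)
      (fun m n hmn ω hω j hj1 hj2 => hω j hj1 (le_trans hj2 hmn))
      ⟨0, measure_ne_top P _⟩
  have t2 : Tendsto (fun n => P (Qpev X n)) atTop (𝓝 (P (⋂ n, Qpev X n))) :=
    tendsto_measure_iInter_atTop
      (fun n => (measurable_Qpev X hXmeas n).nullMeasurableSet)
      (fun m n hmn ω hω j hj1 hj2 => hω j hj1 (le_trans hj2 hmn))
      ⟨0, measure_ne_top P _⟩
  have t1' : Tendsto (fun n => P (Qpev X n)) atTop (𝓝 (P (⋂ n, Fkn X k n))) :=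
    t1.congr (fun n => hFkn_law P X hXmeas hXindep hXident k n)
  rw [hFeq, hPeq]
  exact tendsto_nhds_unique t1' t2

omit hXindep hXident

/-- deterministic: if the walk is eventually positive, some shifted walk stays
strictly above its starting point forever -/
lemma cover_subset (ω : Ω) (N : ℕ) (hN : ∀ n, N ≤ n → 0 < Swalk X n ω) :
    ∃ k, ω ∈ Fev X k := by
  obtain ⟨b, hbmem, hbmin⟩ := Finset.exists_min_image (Finset.range (N + 1))
    (fun n => Swalk X n ω) ⟨0, by simp⟩
  classical
  set T := (Finset.range (N + 1)).filter (fun n => Swalk X n ω ≤ Swalk X b ω) with hT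
  have hTne : T.Nonempty := ⟨b, by simp [hT, Finset.mem_range.mp hbmem]⟩
  set k := T.max' hTne with hk
  have hkT : k ∈ T := T.max'_mem hTne
  have hkrange : k < N + 1 := Finset.mem_range.mp (Finset.mem_filter.mp hkT).1
  have hkmin' : Swalk X k ω ≤ Swalk X b ω := (Finset.mem_filter.mp hkT).2
  have hmin : ∀ n, n < N + 1 → Swalk X k ω ≤ Swalk X n ω := fun n hn =>
    le_trans hkmin' (hbmin n (Finset.mem_range.mpr hn))
  have hk0 : Swalk X k ω ≤ 0 := by
    have := hmin 0 (by omega)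
    rwa [swalk_zero] at this
  refine ⟨k, fun j hj => ?_⟩
  rw [sub_pos]
  rcases lt_or_ge (k + j) (N + 1) with h | h
  · rcases lt_or_eq_of_le (hmin (k + j) h) with h' | h'
    · exact h'
    · exfalso
      have hmem : k + j ∈ T := Finset.mem_filter.mpr
        ⟨Finset.mem_range.mpr h, by rw [← h']; exact hkmin'⟩
      have := T.le_max' _ hmem
      omega
  · exact lt_of_le_of_lt hk0 (hN (k + j) (by omega))

/-- SLLN: almost surely the walk is eventually strictly positive. -/
lemma slln_pos (a : ℝ) (ha : 0 < a)
    (hXint : Integrable (fun ω => (X 0 ω : ℝ)) P)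
    (hmean : ∫ ω, (X 0 ω : ℝ) ∂P = a)
    (hXindep : iIndepFun X P)
    (hXident : ∀ i, IdentDistrib (X i) (X 0) P P) :
    ∀ᵐ ω ∂P, ∃ N, ∀ n, N ≤ n → 0 < Swalk X n ω := by
  set Y : ℕ → Ω → ℝ := fun i ω => (X i ω : ℝ) with hY
  have hcast : Measurable (fun z : ℤ => (z : ℝ)) := Measurable.of_discrete
  have hindep : Pairwise (Function.onFun (fun f g => IndepFun f g P) Y) := by
    intro i j hij
    exact (hXindep.indepFun hij).comp hcast hcast
  have hident : ∀ i, IdentDistrib (Y i) (Y 0) P P := fun i => (hXident i).comp hcast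
  have hslln := strong_law_ae_real Y hXint hindep hident
  filter_upwards [hslln] with ω hω
  have hmean' : (P[Y 0]) = a := hmean
  rw [hmean'] at hω
  have hev : ∀ᶠ n : ℕ in atTop, a / 2 < (∑ i ∈ Finset.range n, Y i ω) / n :=
    hω.eventually (eventually_gt_nhds (by linarith))
  obtain ⟨N, hN⟩ := eventually_atTop.mp hev
  refine ⟨max N 1, fun n hn => ?_⟩
  have h1 := hN n (le_trans (le_max_left _ _) hn)
  have hn1 : (1 : ℕ) ≤ n := le_trans (le_max_right _ _) hn
  have hnpos : (0 : ℝ) < n := by exact_mod_cast hn1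
  rw [lt_div_iff₀ hnpos] at h1
  have hsum : (0 : ℝ) < ∑ i ∈ Finset.range n, Y i ω := by nlinarith
  have hcast2 : ((Swalk X n ω : ℤ) : ℝ) = ∑ i ∈ Finset.range n, Y i ω := by
    rw [Swalk]; push_cast; rfl
  have : (0 : ℝ) < ((Swalk X n ω : ℤ) : ℝ) := by rw [hcast2]; exact hsum
  exact_mod_cast this

include hXindep hXident

lemma p_pos (a : ℝ) (ha : 0 < a)
    (hXint : Integrable (fun ω => (X 0 ω : ℝ)) P)
    (hmean : ∫ ω, (X 0 ω : ℝ) ∂P = a) :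
    0 < pr P (pEvent X) := by
  have hae : ∀ᵐ ω ∂P, ω ∈ ⋃ k, Fev X k := by
    filter_upwards [slln_pos P X hXmeas a ha hXint hmean hXindep hXident] with ω hω
    obtain ⟨N, hN⟩ := hω
    obtain ⟨k, hk⟩ := cover_subset X hXmeas ω N hN
    exact Set.mem_iUnion.mpr ⟨k, hk⟩
  have hone : 1 ≤ P (⋃ k, Fev X k) := by
    have hcompl : P {ω | ω ∉ ⋃ k, Fev X k} = 0 := by
      rw [← MeasureTheory.ae_iff]
      exact hae
    have hle : P Set.univ ≤ P (⋃ k, Fev X k) + P {ω | ω ∉ ⋃ k, Fev X k} := by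
      rw [show (Set.univ : Set Ω) = (⋃ k, Fev X k) ∪ {ω | ω ∉ ⋃ k, Fev X k} from
        (Set.union_compl_self _).symm]
      exact measure_union_le _ _
    rw [measure_univ, hcompl, add_zero] at hle
    exact hle
  by_contra h
  push_neg at h
  have h0 : pr P (pEvent X) = 0 := le_antisymm h (pr_nonneg P _)
  have hp0 : P (pEvent X) = 0 := by
    rw [pr] at h0
    rcases ENNReal.toReal_eq_zero_iff _ |>.mp h0 with h' | h'
    · exact h'
    · exact absurd h' (measure_ne_top P _)
  have hFk0 : ∀ k, P (Fev X k) = 0 := fun k => by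
    rw [hFev_law P X hXmeas hXindep hXident k]; exact hp0
  have : P (⋃ k, Fev X k) = 0 := measure_iUnion_null hFk0
  rw [this] at hone
  simp at hone

/-- decomposition of the complement of `pEvent` by the first nonpositive time -/
lemma B_tsum :
    Summable (fun n => pr P (Bev X n))
      ∧ (∑' n, pr P (Bev X n)) = 1 - pr P (pEvent X) := by
  classical
  have hcompl : (pEvent X)ᶜ = ⋃ n, Bev X n := by
    ext ω
    simp only [pEvent, Bev, Set.mem_compl_iff, Set.mem_setOf_eq, Set.mem_iUnion]
    constructor
    · intro h
      push_neg at h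
      obtain ⟨j, hj1, hj2⟩ := h
      have hex : ∃ j, 1 ≤ j ∧ Swalk X j ω ≤ 0 := ⟨j, hj1, hj2⟩
      set j0 := Nat.find hex with hj0
      obtain ⟨hj01, hj0le⟩ := Nat.find_spec hex
      refine ⟨j0 - 1, fun i hi1 hi2 => ?_, ?_⟩
      · by_contra hle
        exact Nat.find_min hex (by omega : i < j0) ⟨hi1, by omega⟩
      · rwa [show j0 - 1 + 1 = j0 from by omega]
    · rintro ⟨n, h1, h2⟩
      intro h
      exact absurd (h (n + 1) (by omega)) (not_lt.mpr h2)
  have hdisj : Pairwise (Function.onFun Disjoint fun n => Bev X n) := by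
    intro m m' hne
    refine Set.disjoint_left.mpr ?_
    rintro ω ⟨h1, h2⟩ ⟨h1', h2'⟩
    rcases Nat.lt_or_ge m m' with h | h
    · exact absurd h2 (not_le.mpr (h1' (m + 1) (by omega) (by omega)))
    · have : m' < m := by omega
      exact absurd h2' (not_le.mpr (h1 (m' + 1) (by omega) (by omega)))
  have hmeasB : ∀ n, MeasurableSet (Bev X n) := fun n =>
    measurable_Bev P X hXmeas hXindep hXident n
  have hiU : P ((pEvent X)ᶜ) = ∑' n, P (Bev X n) := by
    rw [hcompl, measure_iUnion hdisj hmeasB]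
  have hc : P ((pEvent X)ᶜ) = 1 - P (pEvent X) :=
    prob_compl_eq_one_sub (measurable_pEvent X hXmeas)
  have hne : ∑' n, P (Bev X n) ≠ ⊤ := by
    rw [← hiU]; exact measure_ne_top P _
  constructor
  · exact ENNReal.summable_toReal hne
  · have := ENNReal.tsum_toReal_eq (f := fun n => P (Bev X n)) (fun n => measure_ne_top P _)
    rw [pr]
    calc (∑' n, pr P (Bev X n)) = (∑' n, P (Bev X n)).toReal := this.symm
      _ = (P ((pEvent X)ᶜ)).toReal := by rw [hiU]
      _ = (1 - P (pEvent X)).toReal := by rw [hc]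
      _ = 1 - (P (pEvent X)).toReal := by
          rw [ENNReal.toReal_sub_of_le prob_le_one ENNReal.one_ne_top]
          simp

end Limit

end DualityAux

namespace DualityAux

section Part2

set_option linter.unusedSectionVars false
set_option maxHeartbeats 1000000

variable {Ω : Type*} [MeasurableSpace Ω] (P : Measure Ω) [IsProbabilityMeasure P]
variable (X : ℕ → Ω → ℤ)

lemma part2
    (hXmeas : ∀ i, Measurable (X i))
    (hXindep : iIndepFun X P)
    (hXident : ∀ i, IdentDistrib (X i) (X 0) P P)
    (a : ℝ) (ha : 0 < a)
    (hXint : Integrable (fun ω => (X 0 ω : ℝ)) P)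
    (hmean : ∫ ω, (X 0 ω : ℝ) ∂P = a) :
    pr P (pEvent X) * (∑' n, pr P (Qev X n)) = 1 := by
  set p : ℝ := pr P (pEvent X) with hpdef
  set q : ℕ → ℝ := fun n => pr P (Qev X n) with hqdef
  set Bv : ℕ → ℝ := fun n => pr P (Bev X n) with hBdef
  have hp : 0 < p := p_pos P X hXmeas hXindep hXident a ha hXint hmean
  obtain ⟨hBsummable, hBtsum⟩ := B_tsum P X hXmeas hXindep hXident
  have hq0 : ∀ n, 0 ≤ q n := fun n => pr_nonneg P _
  have hq1 : ∀ n, q n ≤ 1 := fun n => pr_le_one P _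
  have hB0 : ∀ n, 0 ≤ Bv n := fun n => pr_nonneg P _
  have hB1 : ∀ n, Bv n ≤ 1 := fun n => pr_le_one P _
  have sumq : ∀ z : ℝ, 0 ≤ z → z < 1 → Summable (fun n => z ^ n * q n) := by
    intro z hz0 hz1
    have := sum_zq z hz0 hz1 q hq0 hq1 0
    simpa using this
  have sumB : ∀ z : ℝ, 0 ≤ z → z < 1 → Summable (fun n => z ^ (n + 1) * Bv n) := fun z hz0 hz1 =>
    sum_zq z hz0 hz1 Bv hB0 hB1 1
  have hgle : ∀ z : ℝ, 0 ≤ z → z < 1 → (∑' n, z ^ (n + 1) * Bv n) ≤ 1 - p := by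
    intro z hz0 hz1
    calc (∑' n, z ^ (n + 1) * Bv n) ≤ ∑' n, Bv n := by
          refine Summable.tsum_le_tsum (fun n => ?_) (sumB z hz0 hz1) hBsummable
          exact mul_le_of_le_one_left (hB0 n) (pow_le_one₀ hz0 hz1.le)
      _ = 1 - p := hBtsum
  have hcore : ∀ z : ℝ, 0 ≤ z → z < 1 →
      (∑' n, z ^ n * q n) * (1 - ∑' n, z ^ (n + 1) * Bv n) = 1 := fun z hz0 hz1 =>
    core_identity P X z hz0 hz1 hXmeas hXindep hXident
  have h1gz : ∀ z : ℝ, 0 ≤ z → z < 1 → p ≤ 1 - ∑' n, z ^ (n + 1) * Bv n := by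
    intro z hz0 hz1
    have := hgle z hz0 hz1
    linarith
  have hfle : ∀ z : ℝ, 0 ≤ z → z < 1 → (∑' n, z ^ n * q n) ≤ 1 / p := by
    intro z hz0 hz1
    have hgz := h1gz z hz0 hz1
    have h1g0 : 0 < 1 - ∑' n, z ^ (n + 1) * Bv n := lt_of_lt_of_le hp hgz
    have hf : (∑' n, z ^ n * q n) = 1 / (1 - ∑' n, z ^ (n + 1) * Bv n) := by
      rw [eq_div_iff (ne_of_gt h1g0)]
      exact hcore z hz0 hz1
    rw [hf]
    exact one_div_le_one_div_of_le hp hgz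
  have hsumrange : ∀ N, (∑ n ∈ Finset.range N, q n) ≤ 1 / p := by
    intro N
    have hcont : Continuous (fun z : ℝ => ∑ n ∈ Finset.range N, z ^ n * q n) :=
      continuous_finset_sum _ (fun i _ => (continuous_pow i).mul continuous_const)
    have htend : Tendsto (fun z : ℝ => ∑ n ∈ Finset.range N, z ^ n * q n) (𝓝[<] 1)
        (𝓝 (∑ n ∈ Finset.range N, q n)) := by
      have h := (hcont.tendsto 1).mono_left (nhdsWithin_le_nhds (s := Set.Iio (1 : ℝ)))
      simpa using h
    refine le_of_tendsto htend ?_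
    filter_upwards [Ioo_mem_nhdsLT_of_mem
      (show (1 : ℝ) ∈ Set.Ioc 0 1 from ⟨one_pos, le_rfl⟩)] with z hz
    obtain ⟨hz0, hz1⟩ := hz
    calc (∑ n ∈ Finset.range N, z ^ n * q n) ≤ ∑' n, z ^ n * q n :=
          Summable.sum_le_tsum _ (fun n _ => mul_nonneg (pow_nonneg hz0.le _) (hq0 n))
            (sumq z hz0.le hz1)
      _ ≤ 1 / p := hfle z hz0.le hz1
  have hsummableq : Summable q := summable_of_sum_range_le hq0 hsumrange
  have hQle : (∑' n, q n) ≤ 1 / p := Real.tsum_le_of_sum_range_le hq0 hsumrange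
  have hQ0 : 0 ≤ ∑' n, q n := tsum_nonneg hq0
  have hlow : ∀ N, 1 ≤ (∑' n, q n) * (1 - ∑ n ∈ Finset.range N, Bv n) := by
    intro N
    have hcont : Continuous (fun z : ℝ =>
        (∑' n, q n) * (1 - ∑ n ∈ Finset.range N, z ^ (n + 1) * Bv n)) := by
      refine continuous_const.mul (continuous_const.sub ?_)
      exact continuous_finset_sum _ (fun i _ => (continuous_pow (i + 1)).mul continuous_const)
    have htend : Tendsto (fun z : ℝ =>
        (∑' n, q n) * (1 - ∑ n ∈ Finset.range N, z ^ (n + 1) * Bv n)) (𝓝[<] 1)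
        (𝓝 ((∑' n, q n) * (1 - ∑ n ∈ Finset.range N, Bv n))) := by
      have h := (hcont.tendsto 1).mono_left (nhdsWithin_le_nhds (s := Set.Iio (1 : ℝ)))
      simpa using h
    refine ge_of_tendsto htend ?_
    filter_upwards [Ioo_mem_nhdsLT_of_mem
      (show (1 : ℝ) ∈ Set.Ioc 0 1 from ⟨one_pos, le_rfl⟩)] with z hz
    obtain ⟨hz0, hz1⟩ := hz
    have hfq : (∑' n, z ^ n * q n) ≤ ∑' n, q n := by
      refine Summable.tsum_le_tsum (fun n => ?_) (sumq z hz0.le hz1) hsummableq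
      exact mul_le_of_le_one_left (hq0 n) (pow_le_one₀ hz0.le hz1.le)
    have hpart : (∑ n ∈ Finset.range N, z ^ (n + 1) * Bv n) ≤ ∑' n, z ^ (n + 1) * Bv n :=
      Summable.sum_le_tsum _ (fun n _ => mul_nonneg (pow_nonneg hz0.le _) (hB0 n)) (sumB z hz0.le hz1)
    have h1g := h1gz z hz0.le hz1
    have hcorez := hcore z hz0.le hz1
    have s1 : 1 ≤ (∑' n, q n) * (1 - ∑' n, z ^ (n + 1) * Bv n) := by
      calc (1 : ℝ) = (∑' n, z ^ n * q n) * (1 - ∑' n, z ^ (n + 1) * Bv n) := hcorez.symm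
        _ ≤ (∑' n, q n) * (1 - ∑' n, z ^ (n + 1) * Bv n) :=
            mul_le_mul_of_nonneg_right hfq (by linarith)
    calc (1 : ℝ) ≤ (∑' n, q n) * (1 - ∑' n, z ^ (n + 1) * Bv n) := s1
      _ ≤ (∑' n, q n) * (1 - ∑ n ∈ Finset.range N, z ^ (n + 1) * Bv n) :=
          mul_le_mul_of_nonneg_left (by linarith) hQ0
  have hBtend : Tendsto (fun N => (∑' n, q n) * (1 - ∑ n ∈ Finset.range N, Bv n)) atTop
      (𝓝 ((∑' n, q n) * (1 - (1 - p)))) := by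
    refine Tendsto.mul tendsto_const_nhds (Tendsto.sub tendsto_const_nhds ?_)
    rw [← hBtsum]
    exact hBsummable.hasSum.tendsto_sum_nat
  have h1le : 1 ≤ (∑' n, q n) * (1 - (1 - p)) :=
    ge_of_tendsto hBtend (Filter.Eventually.of_forall hlow)
  have h1le' : 1 ≤ (∑' n, q n) * p := by
    have heq : (∑' n, q n) * (1 - (1 - p)) = (∑' n, q n) * p := by ring
    linarith [heq ▸ h1le]
  have h2 : (∑' n, q n) * p ≤ 1 := (le_div_iff₀ hp).mp hQle
  have : (∑' n, q n) * p = 1 := le_antisymm h2 h1le'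
  calc p * (∑' n, q n) = (∑' n, q n) * p := mul_comm _ _
    _ = 1 := this

end Part2

end DualityAux


/-- the generating-function duality identity
`(1 - E z^{τ₊})(1 - E[z^τ; τ < ∞]) = 1 - z` for `z ∈ [0,1)`, and the consequence
`P(τ = ∞) · E τ₊ = 1` (with `E τ₊ = Σ_{n≥0} P(τ₊ > n)`). -/
theorem duality_identity_and_renewal
    {Ω : Type*} [MeasurableSpace Ω] (P : Measure Ω) [IsProbabilityMeasure P]
    (X : ℕ → Ω → ℤ)
    -- `X` are i.i.d. under `P`
    (hXmeas : ∀ i, Measurable (X i))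
    (hXindep : iIndepFun X P)
    (hXident : ∀ i, IdentDistrib (X i) (X 0) P P)
    -- positive drift `E X₁ = a > 0`
    (a : ℝ) (ha : 0 < a)
    (hXint : Integrable (fun ω => (X 0 ω : ℝ)) P)
    (hmean : ∫ ω, (X 0 ω : ℝ) ∂P = a) :
    (∀ z : ℝ, 0 ≤ z → z < 1 →
      -- `E z^{τ₊} = Σ_{n≥0} z^{n+1} P(τ₊ = n+1)` (here `τ₊ < ∞` a.s.)
      (1 - ∑' n : ℕ, z ^ (n + 1) *
          pr P {ω | (∀ j : ℕ, 1 ≤ j → j ≤ n → Swalk X j ω ≤ 0) ∧ 0 < Swalk X (n + 1) ω})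
        -- `E[z^τ; τ < ∞] = Σ_{n≥0} z^{n+1} P(τ = n+1)`
        * (1 - ∑' n : ℕ, z ^ (n + 1) *
          pr P {ω | (∀ j : ℕ, 1 ≤ j → j ≤ n → 0 < Swalk X j ω) ∧ Swalk X (n + 1) ω ≤ 0})
        = 1 - z) ∧
    pr P {ω | ∀ j : ℕ, 1 ≤ j → 0 < Swalk X j ω}
        * (∑' n : ℕ, pr P {ω | ∀ j : ℕ, 1 ≤ j → j ≤ n → Swalk X j ω ≤ 0}) = 1 := by
  constructor
  · intro z hz0 hz1
    exact DualityAux.part1 P X z hz0 hz1 hXmeas hXindep hXident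
  · exact DualityAux.part2 P X hXmeas hXindep hXident a ha hXint hmean
end

section
/- For every integer x ≥ 1 with P(M_τ = x) > 0 and every integer j ≥ 1, one has the exact identity P(τ − θ_τ = j | M_τ = x) = P(τ_x = j, τ₊ > j) / P(τ₊ > τ_x), where τ_x = inf{n ≥ 1 : x + S_n ≤ 0} and τ₊ = min{n ≥ 1 : S_n > 0} are first passage times of a fresh copy of the walk. -/
open MeasureTheory ProbabilityTheory Filter Real

variable {Ω : Type*}

namespace DescentAux


/-- partial sums of a finite tuple -/
def vsum {m : ℕ} (v : Fin m → ℤ) (k : ℕ) : ℤ :=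
  ∑ i : Fin m, if (i : ℕ) < k then v i else 0

lemma vsum_eq {m k : ℕ} (hk : k ≤ m) (f : ℕ → ℤ) :
    vsum (fun i : Fin m => f i) k = ∑ i ∈ Finset.range k, f i := by
  classical
  unfold vsum
  rw [Fin.sum_univ_eq_sum_range (fun i => if i < k then f i else 0) m,
    ← Finset.sum_filter]
  congr 1
  ext i
  simp only [Finset.mem_filter, Finset.mem_range]
  omega

lemma measurable_vsum (m k : ℕ) : Measurable (fun v : Fin m → ℤ => vsum v k) := by
  unfold vsum
  refine Finset.measurable_sum _ fun i _ => ?_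
  by_cases h : (i : ℕ) < k
  · simpa [h] using measurable_pi_apply i
  · simpa [h] using measurable_const

def Cset (x j : ℕ) : Set (Fin j → ℤ) :=
  {v | (∀ i : ℕ, 1 ≤ i → i ≤ j → vsum v i ≤ 0) ∧
    (∀ i : ℕ, 1 ≤ i → i < j → -(x : ℤ) < vsum v i) ∧ vsum v j ≤ -(x : ℤ)}

def Dset (x n : ℕ) : Set (Fin n → ℤ) :=
  {v | (∀ k : ℕ, 1 ≤ k → k ≤ n → 0 < vsum v k) ∧
    (∀ k : ℕ, k < n → vsum v k < (x : ℤ)) ∧ vsum v n = (x : ℤ)}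

lemma measurableSet_Cset (x j : ℕ) : MeasurableSet (Cset x j) := by
  have h1 : MeasurableSet {v : Fin j → ℤ | ∀ i : ℕ, 1 ≤ i → i ≤ j → vsum v i ≤ 0} := by
    have : {v : Fin j → ℤ | ∀ i : ℕ, 1 ≤ i → i ≤ j → vsum v i ≤ 0}
        = ⋂ i : ℕ, {v | 1 ≤ i → i ≤ j → vsum v i ≤ 0} := by
      ext v; simp [Set.mem_iInter]
    rw [this]
    refine MeasurableSet.iInter fun i => ?_
    by_cases h : 1 ≤ i ∧ i ≤ j
    · simp only [h.1, h.2, forall_true_left]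
      exact measurableSet_le (measurable_vsum j i) measurable_const
    · have : {v : Fin j → ℤ | 1 ≤ i → i ≤ j → vsum v i ≤ 0} = Set.univ := by
        ext v; simp only [Set.mem_setOf_eq, Set.mem_univ, iff_true]
        intro h1 h2; exact absurd ⟨h1, h2⟩ h
      rw [this]; exact MeasurableSet.univ
  have h2 : MeasurableSet {v : Fin j → ℤ | ∀ i : ℕ, 1 ≤ i → i < j → -(x : ℤ) < vsum v i} := by
    have : {v : Fin j → ℤ | ∀ i : ℕ, 1 ≤ i → i < j → -(x : ℤ) < vsum v i}
        = ⋂ i : ℕ, {v | 1 ≤ i → i < j → -(x : ℤ) < vsum v i} := by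
      ext v; simp [Set.mem_iInter]
    rw [this]
    refine MeasurableSet.iInter fun i => ?_
    by_cases h : 1 ≤ i ∧ i < j
    · simp only [h.1, h.2, forall_true_left]
      exact measurableSet_lt measurable_const (measurable_vsum j i)
    · have : {v : Fin j → ℤ | 1 ≤ i → i < j → -(x : ℤ) < vsum v i} = Set.univ := by
        ext v; simp only [Set.mem_setOf_eq, Set.mem_univ, iff_true]
        intro h1 h2; exact absurd ⟨h1, h2⟩ h
      rw [this]; exact MeasurableSet.univ
  have h3 : MeasurableSet {v : Fin j → ℤ | vsum v j ≤ -(x : ℤ)} :=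
    measurableSet_le (measurable_vsum j j) measurable_const
  have heq : Cset x j = {v : Fin j → ℤ | ∀ i : ℕ, 1 ≤ i → i ≤ j → vsum v i ≤ 0}
      ∩ ({v | ∀ i : ℕ, 1 ≤ i → i < j → -(x : ℤ) < vsum v i} ∩ {v | vsum v j ≤ -(x : ℤ)}) := by
    ext v; simp only [Cset, Set.mem_setOf_eq, Set.mem_inter_iff]
  rw [heq]; exact h1.inter (h2.inter h3)


lemma measurableSet_Dset (x n : ℕ) : MeasurableSet (Dset x n) := by
  have h1 : MeasurableSet {v : Fin n → ℤ | ∀ k : ℕ, 1 ≤ k → k ≤ n → 0 < vsum v k} := by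
    have : {v : Fin n → ℤ | ∀ k : ℕ, 1 ≤ k → k ≤ n → 0 < vsum v k}
        = ⋂ k : ℕ, {v | 1 ≤ k → k ≤ n → 0 < vsum v k} := by
      ext v; simp [Set.mem_iInter]
    rw [this]
    refine MeasurableSet.iInter fun k => ?_
    by_cases h : 1 ≤ k ∧ k ≤ n
    · simp only [h.1, h.2, forall_true_left]
      exact measurableSet_lt measurable_const (measurable_vsum n k)
    · have : {v : Fin n → ℤ | 1 ≤ k → k ≤ n → 0 < vsum v k} = Set.univ := by
        ext v; simp only [Set.mem_setOf_eq, Set.mem_univ, iff_true]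
        intro h1 h2; exact absurd ⟨h1, h2⟩ h
      rw [this]; exact MeasurableSet.univ
  have h2 : MeasurableSet {v : Fin n → ℤ | ∀ k : ℕ, k < n → vsum v k < (x : ℤ)} := by
    have : {v : Fin n → ℤ | ∀ k : ℕ, k < n → vsum v k < (x : ℤ)}
        = ⋂ k : ℕ, {v | k < n → vsum v k < (x : ℤ)} := by
      ext v; simp [Set.mem_iInter]
    rw [this]
    refine MeasurableSet.iInter fun k => ?_
    by_cases h : k < n
    · simp only [h, forall_true_left]
      exact measurableSet_lt (measurable_vsum n k) measurable_const
    · have : {v : Fin n → ℤ | k < n → vsum v k < (x : ℤ)} = Set.univ := by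
        ext v; simp only [Set.mem_setOf_eq, Set.mem_univ, iff_true]
        intro h1; exact absurd h1 h
      rw [this]; exact MeasurableSet.univ
  have h3 : MeasurableSet {v : Fin n → ℤ | vsum v n = (x : ℤ)} :=
    measurableSet_eq_fun (measurable_vsum n n) measurable_const
  have heq : Dset x n = {v : Fin n → ℤ | ∀ k : ℕ, 1 ≤ k → k ≤ n → 0 < vsum v k}
      ∩ ({v | ∀ k : ℕ, k < n → vsum v k < (x : ℤ)} ∩ {v | vsum v n = (x : ℤ)}) := by
    ext v; simp only [Dset, Set.mem_setOf_eq, Set.mem_inter_iff]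
  rw [heq]; exact h1.inter (h2.inter h3)

variable {Ω : Type*}

/-- the tuple `(X n, X (n+1), …, X (n+m-1))`. -/
def tup (X : ℕ → Ω → ℤ) (n m : ℕ) (ω : Ω) : Fin m → ℤ := fun i => X (n + (i : ℕ)) ω

lemma measurable_tup [MeasurableSpace Ω] (X : ℕ → Ω → ℤ) (hX : ∀ i, Measurable (X i))
    (n m : ℕ) : Measurable (tup X n m) :=
  measurable_pi_lambda _ fun i => hX _

lemma mem_Cset_iff {x j : ℕ} (f : ℕ → ℤ) :
    (fun i : Fin j => f i) ∈ Cset x j ↔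
      ((∀ i : ℕ, 1 ≤ i → i ≤ j → (∑ k ∈ Finset.range i, f k) ≤ 0) ∧
       (∀ i : ℕ, 1 ≤ i → i < j → -(x : ℤ) < ∑ k ∈ Finset.range i, f k) ∧
       (∑ k ∈ Finset.range j, f k) ≤ -(x : ℤ)) := by
  constructor
  · rintro ⟨hA, hB, hC⟩
    refine ⟨fun i h1 h2 => by simpa [vsum_eq h2 f] using hA i h1 h2,
      fun i h1 h2 => by simpa [vsum_eq h2.le f] using hB i h1 h2,
      by simpa [vsum_eq le_rfl f] using hC⟩
  · rintro ⟨hA, hB, hC⟩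
    refine ⟨fun i h1 h2 => by simpa [vsum_eq h2 f] using hA i h1 h2,
      fun i h1 h2 => by simpa [vsum_eq h2.le f] using hB i h1 h2,
      by simpa [vsum_eq le_rfl f] using hC⟩

lemma mem_Dset_iff {x n : ℕ} (f : ℕ → ℤ) :
    (fun i : Fin n => f i) ∈ Dset x n ↔
      ((∀ k : ℕ, 1 ≤ k → k ≤ n → 0 < ∑ i ∈ Finset.range k, f i) ∧
       (∀ k : ℕ, k < n → (∑ i ∈ Finset.range k, f i) < (x : ℤ)) ∧
       (∑ i ∈ Finset.range n, f i) = (x : ℤ)) := by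
  constructor
  · rintro ⟨hA, hB, hC⟩
    refine ⟨fun k h1 h2 => by simpa [vsum_eq h2 f] using hA k h1 h2,
      fun k h2 => by simpa [vsum_eq h2.le f] using hB k h2,
      by simpa [vsum_eq le_rfl f] using hC⟩
  · rintro ⟨hA, hB, hC⟩
    refine ⟨fun k h1 h2 => by simpa [vsum_eq h2 f] using hA k h1 h2,
      fun k h2 => by simpa [vsum_eq h2.le f] using hB k h2,
      by simpa [vsum_eq le_rfl f] using hC⟩


variable (X : ℕ → Ω → ℤ)

/-- the tuple `(X n, X (n+1), …, X (n+m-1))`. -/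
def Aev (x j n : ℕ) : Set Ω :=
  {ω | (∀ i : ℕ, 1 ≤ i → i ≤ j → (∑ k ∈ Finset.range i, X (n + k) ω) ≤ 0) ∧
    (∀ i : ℕ, 1 ≤ i → i < j → -(x : ℤ) < ∑ k ∈ Finset.range i, X (n + k) ω) ∧
    (∑ k ∈ Finset.range j, X (n + k) ω) ≤ -(x : ℤ)}

def Bev (x n : ℕ) : Set Ω :=
  {ω | (∀ k : ℕ, 1 ≤ k → k ≤ n → 0 < Swalk X k ω) ∧
    (∀ k : ℕ, k < n → Swalk X k ω < (x : ℤ)) ∧ Swalk X n ω = (x : ℤ)}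

lemma Aev_eq_preimage (x j n : ℕ) : Aev X x j n = tup X n j ⁻¹' Cset x j := by
  ext ω
  exact (mem_Cset_iff (fun k => X (n + k) ω)).symm

lemma Bev_eq_preimage (x n : ℕ) : Bev X x n = tup X 0 n ⁻¹' Dset x n := by
  ext ω
  rw [Set.mem_preimage]
  have : tup X 0 n ω = fun i : Fin n => (fun k => X (0 + k) ω) i := rfl
  rw [this, mem_Dset_iff (fun k => X (0 + k) ω)]
  simp only [Bev, Swalk, Set.mem_setOf_eq, Nat.zero_add]

section Prob

variable [MeasurableSpace Ω] (P : Measure Ω) [IsProbabilityMeasure P]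
    (hXmeas : ∀ i, Measurable (X i))
    (hXindep : iIndepFun X P)
    (hXident : ∀ i, IdentDistrib (X i) (X 0) P P)

include hXmeas hXindep hXident in
lemma map_tup_eq_pi (n m : ℕ) :
    P.map (tup X n m) = Measure.pi (fun _ : Fin m => P.map (X 0)) := by
  classical
  refine (Measure.pi_eq fun s hs => ?_).symm
  rw [Measure.map_apply (measurable_tup X hXmeas n m) (MeasurableSet.univ_pi hs)]
  set sets : ℕ → Set ℤ := fun k =>
    if h : n ≤ k ∧ k < n + m then s ⟨k - n, by omega⟩ else Set.univ with hsets
  have hkey : ∀ i : Fin m, sets (n + (i : ℕ)) = s i := by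
    intro i
    have hc : n ≤ n + (i : ℕ) ∧ n + (i : ℕ) < n + m := ⟨Nat.le_add_right _ _, by omega⟩
    simp [hsets, hc, Nat.add_sub_cancel_left]
  have hsetsmeas : ∀ k : ℕ, MeasurableSet (sets k) := by
    intro k
    rw [hsets]
    by_cases h : n ≤ k ∧ k < n + m
    · simpa [h] using hs _
    · simp [h]
  have hpre : tup X n m ⁻¹' Set.pi Set.univ s
      = ⋂ k ∈ Finset.image (fun i : Fin m => n + (i : ℕ)) Finset.univ, X k ⁻¹' sets k := by
    ext ω
    simp only [Set.mem_preimage, Set.mem_univ_pi, Set.mem_iInter, Finset.mem_image,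
      Finset.mem_univ, true_and]
    constructor
    · rintro h k ⟨i, rfl⟩
      rw [hkey i]
      exact h i
    · intro h i
      have := h (n + (i : ℕ)) ⟨i, rfl⟩
      rwa [hkey i] at this
  rw [hpre, hXindep.measure_inter_preimage_eq_mul _ (fun k _ => hsetsmeas k),
    Finset.prod_image (by intro a _ b _ hab; exact Fin.ext (by simp only at hab; omega))]
  refine Finset.prod_congr rfl fun i _ => ?_
  rw [hkey i, ← Measure.map_apply (hXmeas _) (hs i), (hXident (n + (i : ℕ))).map_eq]

include hXmeas hXindep hXident in
lemma measure_Aev_shift (x j n : ℕ) : P (Aev X x j n) = P (Aev X x j 0) := by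
  rw [Aev_eq_preimage, Aev_eq_preimage,
    ← Measure.map_apply (measurable_tup X hXmeas n j) (measurableSet_Cset x j),
    ← Measure.map_apply (measurable_tup X hXmeas 0 j) (measurableSet_Cset x j),
    map_tup_eq_pi X P hXmeas hXindep hXident,
    map_tup_eq_pi X P hXmeas hXindep hXident]

include hXmeas hXindep in
lemma measure_inter_BA (x n j : ℕ) :
    P (Bev X x n ∩ Aev X x j n) = P (Bev X x n) * P (Aev X x j n) := by
  classical
  have hdisj : Disjoint (Finset.range n) (Finset.Ico n (n + j)) := by
    simp only [Finset.disjoint_left, Finset.mem_range, Finset.mem_Ico]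
    omega
  have h := hXindep.indepFun_finset (Finset.range n) (Finset.Ico n (n + j)) hdisj hXmeas
  set φ : (↥(Finset.range n) → ℤ) → (Fin n → ℤ) :=
    fun v i => v ⟨(i : ℕ), Finset.mem_range.mpr i.isLt⟩ with hφdef
  set ψ : (↥(Finset.Ico n (n + j)) → ℤ) → (Fin j → ℤ) :=
    fun v i => v ⟨n + (i : ℕ), Finset.mem_Ico.mpr ⟨Nat.le_add_right _ _, by omega⟩⟩ with hψdef
  have hφ : Measurable φ := measurable_pi_lambda _ fun i => measurable_pi_apply _
  have hψ : Measurable ψ := measurable_pi_lambda _ fun i => measurable_pi_apply _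
  have h2 := h.comp hφ hψ
  have e1 : (φ ∘ fun a (i : ↥(Finset.range n)) => X i a) = tup X 0 n := by
    funext ω i
    simp only [Function.comp_apply, hφdef, tup, Nat.zero_add]
  have e2 : (ψ ∘ fun a (i : ↥(Finset.Ico n (n + j))) => X i a) = tup X n j := rfl
  rw [e1, e2] at h2
  rw [Bev_eq_preimage, Aev_eq_preimage]
  exact h2.measure_inter_preimage_eq_mul _ _ (measurableSet_Dset x n) (measurableSet_Cset x j)

end Prob


lemma swalk_add (n i : ℕ) (ω : Ω) :
    Swalk X (n + i) ω = Swalk X n ω + ∑ k ∈ Finset.range i, X (n + k) ω := by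
  rw [Swalk, Swalk, ← Finset.sum_range_add_sum_Ico _ (Nat.le_add_right n i),
    Finset.sum_Ico_eq_sum_range]
  simp

lemma swalk_zero (ω : Ω) : Swalk X 0 ω = 0 := by simp [Swalk]

/-- forward direction: on a block event, `τ`, `θ`, `M` are determined. -/
lemma block_subset (x j n : ℕ) (hx : 1 ≤ x) (hj : 1 ≤ j) :
    Bev X x n ∩ Aev X x j n ⊆
      {ω | tauN X ω - thetaTau X ω = j ∧ Mtau X ω = (x : ℤ)} := by
  rintro ω ⟨⟨hB1, hB2, hB3⟩, ⟨hA1, hA2, hA3⟩⟩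
  have hS : ∀ i : ℕ, Swalk X (n + i) ω = (x : ℤ) + ∑ k ∈ Finset.range i, X (n + k) ω := by
    intro i; rw [swalk_add, hB3]
  have h3 : Swalk X (n + j) ω ≤ 0 := by rw [hS]; linarith [hA3]
  have hpos : ∀ m : ℕ, 1 ≤ m → m < n + j → 0 < Swalk X m ω := by
    intro m h1 h2
    rcases le_or_gt m n with hmn | hmn
    · exact hB1 m h1 hmn
    · obtain ⟨i, rfl⟩ : ∃ i, m = n + i := ⟨m - n, by omega⟩
      have hi1 : 1 ≤ i := by omega
      have hi2 : i < j := by omega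
      have := hA2 i hi1 hi2
      rw [hS]; linarith
  have hmemτ : (n + j) ∈ {m : ℕ | 1 ≤ m ∧ Swalk X m ω ≤ 0} := ⟨by omega, h3⟩
  have htau : tauN X ω = n + j := by
    refine le_antisymm (Nat.sInf_le hmemτ) ?_
    by_contra hlt
    push_neg at hlt
    have hmem := Nat.sInf_mem (⟨n + j, hmemτ⟩ : {m : ℕ | 1 ≤ m ∧ Swalk X m ω ≤ 0}.Nonempty)
    obtain ⟨ht1, ht2⟩ := hmem
    exact absurd ht2 (not_le.mpr (hpos _ ht1 hlt))
  have hMle : ∀ k ∈ Finset.range (tauN X ω + 1), Swalk X k ω ≤ (x : ℤ) := by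
    intro k hk
    rw [Finset.mem_range, htau] at hk
    rcases Nat.eq_zero_or_pos k with rfl | hk1
    · rw [swalk_zero]; exact_mod_cast Nat.zero_le x
    rcases lt_trichotomy k n with h | h | h
    · exact le_of_lt (hB2 k h)
    · rw [h, hB3]
    · obtain ⟨i, rfl⟩ : ∃ i, k = n + i := ⟨k - n, by omega⟩
      have hi1 : 1 ≤ i := by omega
      have hi2 : i ≤ j := by omega
      have := hA1 i hi1 hi2
      rw [hS]; linarith
  have hM : Mtau X ω = (x : ℤ) := by
    refine le_antisymm (Finset.sup'_le _ _ hMle) ?_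
    have hmem : n ∈ Finset.range (tauN X ω + 1) := by rw [htau, Finset.mem_range]; omega
    calc (x : ℤ) = Swalk X n ω := hB3.symm
      _ ≤ _ := Finset.le_sup' (fun k => Swalk X k ω) hmem
  have hθ : thetaTau X ω = n := by
    have hmem : n ∈ {m : ℕ | Swalk X m ω = Mtau X ω} := by
      rw [Set.mem_setOf_eq, hM, hB3]
    refine le_antisymm (Nat.sInf_le hmem) ?_
    refine le_csInf ⟨n, hmem⟩ fun m hm => ?_
    by_contra hmn
    push_neg at hmn
    rw [Set.mem_setOf_eq, hM] at hm
    exact absurd hm (ne_of_lt (hB2 m hmn))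
  exact ⟨by rw [htau, hθ]; omega, hM⟩

/-- master lemma: on `{M_τ = x}` (with `x ≥ 1`), the path decomposes at `θ`. -/
lemma master (x : ℕ) (hx : 1 ≤ x) (ω : Ω) (hMx : Mtau X ω = (x : ℤ)) :
    ω ∈ Bev X x (thetaTau X ω) ∧
    ω ∈ Aev X x (tauN X ω - thetaTau X ω) (thetaTau X ω) ∧
    thetaTau X ω < tauN X ω := by
  have hxz : (0 : ℤ) < (x : ℤ) := by exact_mod_cast hx
  have hne : {m : ℕ | 1 ≤ m ∧ Swalk X m ω ≤ 0}.Nonempty := by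
    by_contra h
    rw [Set.not_nonempty_iff_eq_empty] at h
    have ht0 : tauN X ω = 0 := by rw [tauN, h, Nat.sInf_empty]
    have hM0 : Mtau X ω = 0 := by
      rw [Mtau]
      refine le_antisymm (Finset.sup'_le _ _ fun k hk => ?_) ?_
      · rw [Finset.mem_range, ht0] at hk
        interval_cases k
        rw [swalk_zero]
      · have h0 : 0 ∈ Finset.range (tauN X ω + 1) := Finset.mem_range.mpr (by omega)
        calc (0 : ℤ) = Swalk X 0 ω := (swalk_zero X ω).symm
          _ ≤ _ := Finset.le_sup' (fun k => Swalk X k ω) h0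
    rw [hMx] at hM0
    omega
  set t := tauN X ω with hT
  have htmem : t ∈ {m : ℕ | 1 ≤ m ∧ Swalk X m ω ≤ 0} := by
    rw [hT, tauN]; exact Nat.sInf_mem hne
  obtain ⟨ht1, ht2⟩ := htmem
  have hpos : ∀ m : ℕ, 1 ≤ m → m < t → 0 < Swalk X m ω := by
    intro m h1 h2
    rw [hT, tauN] at h2
    have := Nat.notMem_of_lt_sInf (s := {m : ℕ | 1 ≤ m ∧ Swalk X m ω ≤ 0}) h2
    rw [Set.mem_setOf_eq, not_and] at this
    have := this h1
    omega
  have hMge : ∀ k : ℕ, k ≤ t → Swalk X k ω ≤ (x : ℤ) := by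
    intro k hk
    rw [← hMx]
    exact Finset.le_sup' (fun k => Swalk X k ω) (Finset.mem_range.mpr (by omega))
  set θ := thetaTau X ω with hTh
  obtain ⟨k₀, hk₀, hks₀⟩ := Finset.exists_mem_eq_sup'
    (s := Finset.range (tauN X ω + 1)) (Finset.nonempty_range_iff.mpr
      (Nat.succ_ne_zero _)) (fun k => Swalk X k ω)
  have hks₀' : Mtau X ω = Swalk X k₀ ω := by rw [Mtau]; exact hks₀
  have hθne : {m : ℕ | Swalk X m ω = Mtau X ω}.Nonempty := ⟨k₀, hks₀'.symm⟩
  have hθmem : Swalk X θ ω = Mtau X ω := by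
    have : θ ∈ {m : ℕ | Swalk X m ω = Mtau X ω} := by
      rw [hTh, thetaTau]; exact Nat.sInf_mem hθne
    exact this
  have hθx : Swalk X θ ω = (x : ℤ) := by rw [hθmem, hMx]
  have hθmin : ∀ m : ℕ, m < θ → Swalk X m ω ≠ (x : ℤ) := by
    intro m hm
    rw [hTh, thetaTau] at hm
    have := Nat.notMem_of_lt_sInf (s := {m : ℕ | Swalk X m ω = Mtau X ω}) hm
    rw [Set.mem_setOf_eq, hMx] at this
    exact this
  have hθle : θ ≤ t := by
    have hkt : k₀ ≤ t := by
      have := Finset.mem_range.mp hk₀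
      rw [← hT] at this; omega
    have hθk : θ ≤ k₀ := by
      rw [hTh, thetaTau]
      exact Nat.sInf_le hks₀'.symm
    omega
  have hθlt : θ < t := by
    rcases eq_or_lt_of_le hθle with h | h
    · rw [h] at hθx
      rw [hθx] at ht2
      linarith
    · exact h
  refine ⟨⟨fun k h1 h2 => hpos k h1 (by omega), fun k hk => ?_, hθx⟩, ?_, hθlt⟩
  · exact lt_of_le_of_ne (hMge k (by omega)) (hθmin k hk)
  · have hsum : ∀ i : ℕ, (∑ k ∈ Finset.range i, X (θ + k) ω) = Swalk X (θ + i) ω - (x : ℤ) := by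
      intro i; rw [swalk_add, hθx]; ring
    have htj : θ + (t - θ) = t := by omega
    refine ⟨fun i h1 h2 => ?_, fun i h1 h2 => ?_, ?_⟩
    · rw [hsum]
      have := hMge (θ + i) (by omega)
      linarith
    · rw [hsum]
      have := hpos (θ + i) (by omega) (by omega)
      linarith
    · rw [hsum, htj]
      linarith [ht2]



lemma measurable_Aev [MeasurableSpace Ω] (hX : ∀ i, Measurable (X i)) (x j n : ℕ) :
    MeasurableSet (Aev X x j n) := by
  rw [Aev_eq_preimage]
  exact measurable_tup X hX n j (measurableSet_Cset x j)

lemma measurable_Bev [MeasurableSpace Ω] (hX : ∀ i, Measurable (X i)) (x n : ℕ) :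
    MeasurableSet (Bev X x n) := by
  rw [Bev_eq_preimage]
  exact measurable_tup X hX 0 n (measurableSet_Dset x n)

lemma Bev_pairwise (x j : ℕ) :
    Pairwise (Function.onFun Disjoint fun n => Bev X x n ∩ Aev X x j n) := by
  intro n n' hnn
  rw [Function.onFun, Set.disjoint_left]
  rintro ω ⟨⟨h1, h2, h3⟩, -⟩ ⟨⟨h1', h2', h3'⟩, -⟩
  rcases hnn.lt_or_gt with h | h
  · exact absurd h3 (ne_of_lt (h2' n h))
  · exact absurd h3' (ne_of_lt (h2 n' h))

lemma Aev_succ_pairwise (x : ℕ) :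
    Pairwise (Function.onFun Disjoint fun i => Aev X x (i + 1) 0) := by
  intro i i' hne
  rw [Function.onFun, Set.disjoint_left]
  rintro ω ⟨-, hm, h3⟩ ⟨-, hm', h3'⟩
  rcases hne.lt_or_gt with h | h
  · have := hm' (i + 1) (by omega) (by omega)
    linarith
  · have := hm (i' + 1) (by omega) (by omega)
    linarith

lemma decomp (x j : ℕ) (hx : 1 ≤ x) (hj : 1 ≤ j) :
    {ω : Ω | tauN X ω - thetaTau X ω = j ∧ Mtau X ω = (x : ℤ)}
      = ⋃ n : ℕ, Bev X x n ∩ Aev X x j n := by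
  apply Set.Subset.antisymm
  · rintro ω ⟨hdj, hMx⟩
    obtain ⟨hB, hA, hlt⟩ := master X x hx ω hMx
    refine Set.mem_iUnion.mpr ⟨thetaTau X ω, hB, ?_⟩
    rwa [hdj] at hA
  · intro ω hω
    obtain ⟨n, hn⟩ := Set.mem_iUnion.mp hω
    exact block_subset X x j n hx hj hn

lemma decompM (x : ℕ) (hx : 1 ≤ x) :
    {ω : Ω | Mtau X ω = (x : ℤ)}
      = ⋃ i : ℕ, {ω : Ω | tauN X ω - thetaTau X ω = i + 1 ∧ Mtau X ω = (x : ℤ)} := by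
  ext ω
  simp only [Set.mem_iUnion, Set.mem_setOf_eq]
  constructor
  · intro hMx
    obtain ⟨-, -, hlt⟩ := master X x hx ω hMx
    exact ⟨tauN X ω - thetaTau X ω - 1, by omega, hMx⟩
  · rintro ⟨i, -, h⟩
    exact h

end DescentAux

/-- the exact identity
`P(τ - θ_τ = j | M_τ = x) = P(τ_x = j, τ₊ > j) / P(τ₊ > τ_x)`, where
`τ_x = inf {n ≥ 1 : x + S_n ≤ 0}` and `τ₊ = min {n ≥ 1 : S_n > 0}`. -/
theorem descent_phase_identity
    {Ω : Type*} [MeasurableSpace Ω] (P : Measure Ω) [IsProbabilityMeasure P]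
    (X : ℕ → Ω → ℤ)
    -- `X` are i.i.d. under `P`
    (hXmeas : ∀ i, Measurable (X i))
    (hXindep : iIndepFun X P)
    (hXident : ∀ i, IdentDistrib (X i) (X 0) P P)
    -- negative drift `E X₁ = -a < 0`
    (a : ℝ) (ha : 0 < a)
    (hXint : Integrable (fun ω => (X 0 ω : ℝ)) P)
    (hmean : ∫ ω, (X 0 ω : ℝ) ∂P = -a) :
    ∀ x : ℕ, 1 ≤ x → P {ω | Mtau X ω = (x : ℤ)} ≠ 0 →
      ∀ j : ℕ, 1 ≤ j →
        pr P {ω | tauN X ω - thetaTau X ω = j ∧ Mtau X ω = (x : ℤ)}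
            / pr P {ω | Mtau X ω = (x : ℤ)}
          = -- `P(τ_x = j, τ₊ > j)`
            pr P {ω | (∀ i : ℕ, 1 ≤ i → i ≤ j → Swalk X i ω ≤ 0) ∧
                (∀ i : ℕ, 1 ≤ i → i < j → -(x : ℤ) < Swalk X i ω) ∧
                Swalk X j ω ≤ -(x : ℤ)}
            -- `P(τ₊ > τ_x)`: the walk falls below `-x` before ever becoming positive
            / pr P {ω | ∃ j : ℕ, 1 ≤ j ∧ (∀ i : ℕ, 1 ≤ i → i ≤ j → Swalk X i ω ≤ 0) ∧
                (∀ i : ℕ, 1 ≤ i → i < j → -(x : ℤ) < Swalk X i ω) ∧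
                Swalk X j ω ≤ -(x : ℤ)} := by
  intro x hx hMne j hj
  classical
  set c : ENNReal := ∑' n : ℕ, P (DescentAux.Bev X x n) with hc
  have hstep : ∀ j' : ℕ, 1 ≤ j' →
      P {ω | tauN X ω - thetaTau X ω = j' ∧ Mtau X ω = (x : ℤ)}
        = c * P (DescentAux.Aev X x j' 0) := by
    intro j' hj'
    rw [DescentAux.decomp X x j' hx hj',
      measure_iUnion (DescentAux.Bev_pairwise X x j')
        (fun n => (DescentAux.measurable_Bev X hXmeas x n).inter
          (DescentAux.measurable_Aev X hXmeas x j' n))]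
    have h1 : ∀ n : ℕ, P (DescentAux.Bev X x n ∩ DescentAux.Aev X x j' n)
        = P (DescentAux.Bev X x n) * P (DescentAux.Aev X x j' 0) := fun n => by
      rw [DescentAux.measure_inter_BA X P hXmeas hXindep x n j',
        DescentAux.measure_Aev_shift X P hXmeas hXindep hXident x j' n]
    rw [tsum_congr h1, ENNReal.tsum_mul_right]
  set q : ENNReal := P (⋃ i : ℕ, DescentAux.Aev X x (i + 1) 0) with hq
  have hMdisj : Pairwise (Function.onFun Disjoint
      fun i : ℕ => {ω : Ω | tauN X ω - thetaTau X ω = i + 1 ∧ Mtau X ω = (x : ℤ)}) := by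
    intro i i' hne
    rw [Function.onFun, Set.disjoint_left]
    rintro ω ⟨h1, -⟩ ⟨h1', -⟩
    omega
  have hMmeas : ∀ i : ℕ,
      MeasurableSet {ω : Ω | tauN X ω - thetaTau X ω = i + 1 ∧ Mtau X ω = (x : ℤ)} := by
    intro i
    rw [DescentAux.decomp X x (i + 1) hx (by omega)]
    exact MeasurableSet.iUnion fun n =>
      (DescentAux.measurable_Bev X hXmeas x n).inter
        (DescentAux.measurable_Aev X hXmeas x (i + 1) n)
  have hM : P {ω | Mtau X ω = (x : ℤ)} = c * q := by
    rw [DescentAux.decompM X x hx, measure_iUnion hMdisj hMmeas]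
    calc ∑' i : ℕ, P {ω : Ω | tauN X ω - thetaTau X ω = i + 1 ∧ Mtau X ω = (x : ℤ)}
        = ∑' i : ℕ, c * P (DescentAux.Aev X x (i + 1) 0) :=
          tsum_congr fun i => hstep (i + 1) (by omega)
      _ = c * ∑' i : ℕ, P (DescentAux.Aev X x (i + 1) 0) := ENNReal.tsum_mul_left
      _ = c * q := by
          rw [hq, measure_iUnion (DescentAux.Aev_succ_pairwise X x)
            (fun i => DescentAux.measurable_Aev X hXmeas x (i + 1) 0)]
  have hAset : {ω : Ω | (∀ i : ℕ, 1 ≤ i → i ≤ j → Swalk X i ω ≤ 0) ∧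
      (∀ i : ℕ, 1 ≤ i → i < j → -(x : ℤ) < Swalk X i ω) ∧ Swalk X j ω ≤ -(x : ℤ)}
      = DescentAux.Aev X x j 0 := by
    ext ω
    simp only [DescentAux.Aev, Set.mem_setOf_eq, Nat.zero_add, Swalk]
  have hDset : {ω : Ω | ∃ j : ℕ, 1 ≤ j ∧ (∀ i : ℕ, 1 ≤ i → i ≤ j → Swalk X i ω ≤ 0) ∧
      (∀ i : ℕ, 1 ≤ i → i < j → -(x : ℤ) < Swalk X i ω) ∧ Swalk X j ω ≤ -(x : ℤ)}
      = ⋃ i : ℕ, DescentAux.Aev X x (i + 1) 0 := by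
    ext ω
    simp only [Set.mem_setOf_eq, Set.mem_iUnion, DescentAux.Aev, Nat.zero_add, Swalk]
    constructor
    · rintro ⟨j', hj', h⟩
      obtain ⟨i, rfl⟩ : ∃ i, j' = i + 1 := ⟨j' - 1, by omega⟩
      exact ⟨i, h⟩
    · rintro ⟨i, h⟩
      exact ⟨i + 1, by omega, h⟩
  have hq0 : q ≠ 0 := fun h => hMne (by rw [hM, h, mul_zero])
  have hc0 : c ≠ 0 := fun h => hMne (by rw [hM, h, zero_mul])
  have hMfin : P {ω | Mtau X ω = (x : ℤ)} ≠ ⊤ := measure_ne_top P _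
  have hcfin : c ≠ ⊤ := by
    intro h
    rw [hM, h, ENNReal.top_mul hq0] at hMfin
    exact hMfin rfl
  rw [hAset, hDset, pr, pr, pr, pr, hstep j hj, hM, ← hq, ENNReal.toReal_mul,
    ENNReal.toReal_mul]
  exact mul_div_mul_left _ _ (ENNReal.toReal_ne_zero.mpr ⟨hc0, hcfin⟩)
end

section
/- For all integers n ≥ 1, x ≥ 1, and r ≥ 0, one has the exact identity P(M_n = x, S_n = x − r) = Σ_{k=0}^n P(S_k = x, τ > k) · P(S_{n−k} = −r, τ₊ > n − k), where by duality P(S_k = x, S_k − S_j > 0 for all j < k) = P(S_k = x, τ > k). -/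
open MeasureTheory ProbabilityTheory Filter Real

variable {Ω : Type*}

namespace MaxDecompAux

lemma measSet_cnt {α : Type*} [Countable α] [MeasurableSpace α] [MeasurableSingletonClass α]
    (s : Set α) : MeasurableSet s := (Set.to_countable s).measurableSet

section Prob

variable {Ω : Type*} [MeasurableSpace Ω] {P : Measure Ω} [IsProbabilityMeasure P]
  {X : ℕ → Ω → ℤ}

lemma meas_tuple (hXmeas : ∀ i, Measurable (X i)) {m : ℕ} (g : Fin m → ℕ)
    (Q : (Fin m → ℤ) → Prop) : MeasurableSet {ω | Q (fun i => X (g i) ω)} := by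
  have h : Measurable (fun ω (i : Fin m) => X (g i) ω) :=
    measurable_pi_lambda _ fun i => hXmeas (g i)
  exact h (measSet_cnt {a | Q a})

omit [IsProbabilityMeasure P] in
lemma prob_singleton_tuple (hXindep : iIndepFun X P)
    (hXident : ∀ i, IdentDistrib (X i) (X 0) P P)
    {m : ℕ} {g : Fin m → ℕ} (hg : Function.Injective g) (a : Fin m → ℤ) :
    P {ω | ∀ i, X (g i) ω = a i} = ∏ i, P {ω | X 0 ω = a i} := by
  classical
  set b : ℕ → ℤ := fun j => if h : ∃ i, g i = j then a h.choose else 0 with hb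
  have hbg : ∀ i, b (g i) = a i := by
    intro i
    have h : ∃ i', g i' = g i := ⟨i, rfl⟩
    simp only [hb, dif_pos h]
    congr 1
    exact hg h.choose_spec
  have hmeas : ∀ j ∈ Finset.univ.map ⟨g, hg⟩,
      MeasurableSet[(inferInstance : MeasurableSpace ℤ).comap (X j)] (X j ⁻¹' {b j}) :=
    fun j _ => ⟨{b j}, measurableSet_singleton _, rfl⟩
  have key := hXindep.meas_biInter (S := Finset.univ.map ⟨g, hg⟩)
    (s := fun j => X j ⁻¹' {b j}) hmeas
  have hset : {ω | ∀ i, X (g i) ω = a i} = ⋂ j ∈ Finset.univ.map ⟨g, hg⟩, X j ⁻¹' {b j} := by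
    ext ω
    simp only [Set.mem_setOf_eq, Set.mem_iInter, Set.mem_preimage, Set.mem_singleton_iff,
      Finset.mem_map, Finset.mem_univ, Function.Embedding.coeFn_mk, true_and]
    constructor
    · rintro h j ⟨i, rfl⟩
      rw [hbg]; exact h i
    · intro h i
      rw [← hbg i]; exact h _ ⟨i, rfl⟩
  rw [hset, key, Finset.prod_map]
  refine Finset.prod_congr rfl fun i _ => ?_
  simp only [Function.Embedding.coeFn_mk, hbg]
  exact (hXident (g i)).measure_mem_eq (measurableSet_singleton (a i))

omit [IsProbabilityMeasure P] in
lemma prob_tuple_eq_tsum (hXmeas : ∀ i, Measurable (X i))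
    (hXindep : iIndepFun X P)
    (hXident : ∀ i, IdentDistrib (X i) (X 0) P P)
    {m : ℕ} {g : Fin m → ℕ} (hg : Function.Injective g) (Q : (Fin m → ℤ) → Prop) :
    P {ω | Q (fun i => X (g i) ω)} =
      ∑' a : {a : Fin m → ℤ // Q a}, ∏ i, P {ω | X 0 ω = a.1 i} := by
  have hset : {ω | Q (fun i => X (g i) ω)} =
      ⋃ a : {a : Fin m → ℤ // Q a}, {ω | ∀ i, X (g i) ω = a.1 i} := by
    ext ω
    simp only [Set.mem_setOf_eq, Set.mem_iUnion]
    constructor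
    · intro h; exact ⟨⟨_, h⟩, fun i => rfl⟩
    · rintro ⟨a, ha⟩
      have h2 : (fun i => X (g i) ω) = a.1 := funext ha
      rw [h2]; exact a.2
  rw [hset, measure_iUnion]
  · exact tsum_congr fun a => prob_singleton_tuple hXindep hXident hg a.1
  · intro a a' haa'
    simp only [Function.onFun, Set.disjoint_left]
    intro ω h h'
    exact haa' (Subtype.ext (funext fun i => (h i).symm.trans (h' i)))
  · intro a
    exact meas_tuple hXmeas g (fun v => ∀ i, v i = a.1 i)

omit [IsProbabilityMeasure P] in
lemma prob_tuple_congr (hXmeas : ∀ i, Measurable (X i))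
    (hXindep : iIndepFun X P)
    (hXident : ∀ i, IdentDistrib (X i) (X 0) P P)
    {m : ℕ} {g : Fin m → ℕ} (hg : Function.Injective g) (Q : (Fin m → ℤ) → Prop) :
    P {ω | Q (fun i => X (g i) ω)} = P {ω | Q (fun i => X (i : ℕ) ω)} := by
  rw [prob_tuple_eq_tsum hXmeas hXindep hXident hg Q,
      prob_tuple_eq_tsum hXmeas hXindep hXident Fin.val_injective Q]

omit [IsProbabilityMeasure P] in
lemma prob_inter_shift (hXmeas : ∀ i, Measurable (X i))
    (hXindep : iIndepFun X P)
    (k m : ℕ) (Q : (Fin k → ℤ) → Prop) (R : (Fin m → ℤ) → Prop) :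
    P ({ω | Q (fun i => X (i : ℕ) ω)} ∩ {ω | R (fun i => X (k + (i : ℕ)) ω)}) =
      P {ω | Q (fun i => X (i : ℕ) ω)} * P {ω | R (fun i => X (k + (i : ℕ)) ω)} := by
  classical
  have hST : Disjoint (Finset.range k) (Finset.Ico k (k + m)) := by
    rw [Finset.disjoint_left]
    intro j hj hj'
    rw [Finset.mem_range] at hj
    rw [Finset.mem_Ico] at hj'
    omega
  have hInd := hXindep.indepFun_finset (Finset.range k) (Finset.Ico k (k + m)) hST hXmeas
  have h := hInd.measure_inter_preimage_eq_mul
    (s := {v : {x // x ∈ Finset.range k} → ℤ |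
        Q (fun i : Fin k => v ⟨(i : ℕ), Finset.mem_range.mpr i.isLt⟩)})
    (t := {v : {x // x ∈ Finset.Ico k (k + m)} → ℤ |
        R (fun i : Fin m => v ⟨k + (i : ℕ),
          Finset.mem_Ico.mpr ⟨Nat.le_add_right _ _, Nat.add_lt_add_left i.isLt k⟩⟩)})
    (measSet_cnt _) (measSet_cnt _)
  exact h

end Prob

def extz {m : ℕ} (a : Fin m → ℤ) (i : ℕ) : ℤ := if h : i < m then a ⟨i, h⟩ else 0

def psum {m : ℕ} (a : Fin m → ℤ) (j : ℕ) : ℤ := ∑ i ∈ Finset.range j, extz a i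

lemma psum_reverse {m : ℕ} (a : Fin m → ℤ) {j : ℕ} (hj : j ≤ m) :
    psum (fun i : Fin m => a i.rev) j = psum a m - psum a (m - j) := by
  have h1 : psum a m = psum a (m - j) + ∑ i ∈ Finset.range j, extz a ((m - j) + i) := by
    have h := Finset.sum_range_add (extz a) (m - j) j
    rw [Nat.sub_add_cancel hj] at h
    exact h
  rw [h1, add_sub_cancel_left]
  have h2 : ∑ i ∈ Finset.range j, extz a ((m - j) + i)
      = ∑ i ∈ Finset.range j, extz a ((m - j) + (j - 1 - i)) :=
    (Finset.sum_range_reflect (fun i => extz a ((m - j) + i)) j).symm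
  rw [psum, h2]
  refine Finset.sum_congr rfl fun i hi => ?_
  rw [Finset.mem_range] at hi
  have him : i < m := lt_of_lt_of_le hi hj
  have harith : (m - j) + (j - 1 - i) = m - (i + 1) := by omega
  have hlt : m - (i + 1) < m := by omega
  rw [harith]
  simp only [extz, dif_pos him, dif_pos hlt]
  have heq : Fin.rev ⟨i, him⟩ = (⟨m - (i + 1), hlt⟩ : Fin m) := Fin.ext (by simp [Fin.val_rev])
  rw [heq]

def QAr (k : ℕ) (x : ℤ) (a : Fin k → ℤ) : Prop := psum a k = x ∧ ∀ j < k, psum a j < x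

def QAl (k : ℕ) (x : ℤ) (a : Fin k → ℤ) : Prop :=
  psum a k = x ∧ ∀ j, 1 ≤ j → j ≤ k → 0 < psum a j

def QB (m r : ℕ) (a : Fin m → ℤ) : Prop :=
  psum a m = -(r : ℤ) ∧ ∀ j ≤ m, psum a j ≤ 0

lemma QAl_iff (k : ℕ) (x : ℤ) (a : Fin k → ℤ) :
    QAl k x a ↔ QAr k x (fun i => a i.rev) := by
  have htot : psum (fun i : Fin k => a i.rev) k = psum a k := by
    rw [psum_reverse a le_rfl]; simp [psum]
  constructor
  · rintro ⟨h1, h2⟩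
    refine ⟨htot.trans h1, fun j hj => ?_⟩
    rw [psum_reverse a hj.le, h1]
    have := h2 (k - j) (by omega) (by omega)
    omega
  · rintro ⟨h1, h2⟩
    rw [htot] at h1
    refine ⟨h1, fun j hj1 hj2 => ?_⟩
    have h3 := h2 (k - j) (by omega)
    rw [psum_reverse a (by omega : k - j ≤ k), h1] at h3
    have h4 : k - (k - j) = j := by omega
    rw [h4] at h3
    omega

lemma psum_tupleX0 {Ω : Type*} (X : ℕ → Ω → ℤ) (m : ℕ) (ω : Ω) {j : ℕ} (hj : j ≤ m) :
    psum (fun i : Fin m => X (i : ℕ) ω) j = Swalk X j ω := by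
  refine Finset.sum_congr rfl fun i hi => ?_
  have h : i < m := lt_of_lt_of_le (Finset.mem_range.mp hi) hj
  simp [extz, h]

lemma psum_tupleX {Ω : Type*} (X : ℕ → Ω → ℤ) (k m : ℕ) (ω : Ω) {j : ℕ} (hj : j ≤ m) :
    psum (fun i : Fin m => X (k + (i : ℕ)) ω) j = Swalk X (k + j) ω - Swalk X k ω := by
  have h2 : Swalk X (k + j) ω = Swalk X k ω + ∑ i ∈ Finset.range j, X (k + i) ω :=
    Finset.sum_range_add (fun i => X i ω) k j
  have h3 : psum (fun i : Fin m => X (k + (i : ℕ)) ω) j = ∑ i ∈ Finset.range j, X (k + i) ω := by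
    refine Finset.sum_congr rfl fun i hi => ?_
    have h : i < m := lt_of_lt_of_le (Finset.mem_range.mp hi) hj
    simp [extz, h]
  rw [h3, h2]
  ring

end MaxDecompAux

open MaxDecompAux in
/-- the exact decomposition identity
`P(M_n = x, S_n = x - r) = Σ_{k=0}^n P(S_k = x, τ > k) P(S_{n-k} = -r, τ₊ > n-k)`
(with the conventions `P(S_0 = x, τ > 0) = 1_{x=0}`, `P(S_0 = -r, τ₊ > 0) = 1_{r=0}`,
which are automatic in the formulation below since `S_0 = 0`). -/
theorem max_decomposition_identity
    {Ω : Type*} [MeasurableSpace Ω] (P : Measure Ω) [IsProbabilityMeasure P]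
    (X : ℕ → Ω → ℤ)
    -- `X` are i.i.d. under `P`
    (hXmeas : ∀ i, Measurable (X i))
    (hXindep : iIndepFun X P)
    (hXident : ∀ i, IdentDistrib (X i) (X 0) P P) :
    ∀ n : ℕ, 1 ≤ n → ∀ x : ℤ, 1 ≤ x → ∀ r : ℕ,
      pr P {ω | Mwalk X n ω = x ∧ Swalk X n ω = x - r}
        = ∑ k ∈ Finset.range (n + 1),
            pr P {ω | Swalk X k ω = x ∧ ∀ j : ℕ, 1 ≤ j → j ≤ k → 0 < Swalk X j ω}
              * pr P {ω | Swalk X (n - k) ω = -(r : ℤ) ∧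
                  ∀ j : ℕ, 1 ≤ j → j ≤ n - k → Swalk X j ω ≤ 0} := by
  intro n hn x hx r
  classical
  -- the decomposition pieces
  set A : ℕ → Set Ω := fun k => {ω | QAr k x (fun i : Fin k => X (i : ℕ) ω)} with hA
  set B : ℕ → Set Ω :=
    fun k => {ω | QB (n - k) r (fun i : Fin (n - k) => X (k + (i : ℕ)) ω)} with hB
  -- pointwise characterization of `A k ∩ B k`
  have hEk : ∀ k, k ≤ n → ∀ ω, (ω ∈ A k ∩ B k ↔
      (Swalk X k ω = x ∧ (∀ j < k, Swalk X j ω < x) ∧ Swalk X n ω = x - r ∧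
        ∀ j, k ≤ j → j ≤ n → Swalk X j ω ≤ x)) := by
    intro k hk ω
    simp only [hA, hB, Set.mem_inter_iff, Set.mem_setOf_eq, QAr, QB]
    constructor
    · rintro ⟨⟨ha1, ha2⟩, hb1, hb2⟩
      rw [psum_tupleX0 X k ω le_rfl] at ha1
      rw [psum_tupleX X k (n - k) ω le_rfl] at hb1
      have hkn : k + (n - k) = n := by omega
      rw [hkn] at hb1
      refine ⟨ha1, fun j hj => ?_, by omega, fun j hj1 hj2 => ?_⟩
      · have := ha2 j hj
        rw [psum_tupleX0 X k ω hj.le] at this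
        exact this
      · have hb := hb2 (j - k) (by omega)
        rw [psum_tupleX X k (n - k) ω (by omega : j - k ≤ n - k)] at hb
        have hjk : k + (j - k) = j := by omega
        rw [hjk] at hb
        omega
    · rintro ⟨h1, h2, h3, h4⟩
      refine ⟨⟨?_, fun j hj => ?_⟩, ?_, fun j hj => ?_⟩
      · rw [psum_tupleX0 X k ω le_rfl]; exact h1
      · rw [psum_tupleX0 X k ω hj.le]; exact h2 j hj
      · rw [psum_tupleX X k (n - k) ω le_rfl]
        have hkn : k + (n - k) = n := by omega
        rw [hkn]; omega
      · rw [psum_tupleX X k (n - k) ω hj]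
        have := h4 (k + j) (by omega) (by omega)
        omega
  -- the max characterization
  have hMle : ∀ ω, ∀ j ≤ n, Swalk X j ω ≤ Mwalk X n ω := by
    intro ω j hj
    exact Finset.le_sup' (fun k => Swalk X k ω) (Finset.mem_range.mpr (by omega))
  have hMex : ∀ ω, ∃ j, j ≤ n ∧ Mwalk X n ω = Swalk X j ω := by
    intro ω
    obtain ⟨j, hj, he⟩ := Finset.exists_mem_eq_sup' (s := Finset.range (n + 1))
      (Finset.nonempty_range_iff.mpr (Nat.succ_ne_zero n)) (fun k => Swalk X k ω)
    exact ⟨j, Nat.lt_succ_iff.mp (Finset.mem_range.mp hj), he⟩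
  have hMub : ∀ ω, (∀ j ≤ n, Swalk X j ω ≤ x) → Mwalk X n ω ≤ x := by
    intro ω h
    exact Finset.sup'_le _ _ fun j hj => h j (by
      have := Finset.mem_range.mp hj; omega)
  -- decomposition of the event
  have hunion : {ω | Mwalk X n ω = x ∧ Swalk X n ω = x - r}
      = ⋃ k ∈ Finset.range (n + 1), (A k ∩ B k) := by
    ext ω
    simp only [Set.mem_setOf_eq, Set.mem_iUnion, Finset.mem_range, exists_prop]
    constructor
    · rintro ⟨hM, hS⟩
      have hne : {j | j ≤ n ∧ Swalk X j ω = x}.Nonempty := by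
        obtain ⟨j, hj, he⟩ := hMex ω
        exact ⟨j, hj, by rw [← he, hM]⟩
      set k := sInf {j | j ≤ n ∧ Swalk X j ω = x} with hkdef
      obtain ⟨hkn, hkx⟩ := Nat.sInf_mem hne
      refine ⟨k, by omega, (hEk k hkn ω).mpr ⟨hkx, fun j hj => ?_, hS, fun j _ hj2 => ?_⟩⟩
      · have h1 : Swalk X j ω ≤ x := by rw [← hM]; exact hMle ω j (by omega)
        have h2 : Swalk X j ω ≠ x := by
          intro he
          exact Nat.notMem_of_lt_sInf hj ⟨by omega, he⟩
        exact lt_of_le_of_ne h1 h2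
      · rw [← hM]; exact hMle ω j hj2
    · rintro ⟨k, hk, hmem⟩
      obtain ⟨h1, h2, h3, h4⟩ := (hEk k (by omega) ω).mp hmem
      refine ⟨le_antisymm (hMub ω fun j hj => ?_) ?_, h3⟩
      · rcases lt_or_ge j k with h | h
        · exact (h2 j h).le
        · exact h4 j h hj
      · rw [← h1]; exact hMle ω k (by omega)
  -- disjointness
  have hdisj : (↑(Finset.range (n + 1)) : Set ℕ).PairwiseDisjoint (fun k => A k ∩ B k) := by
    intro k hk k' hk' hne
    simp only [Finset.coe_range, Set.mem_Iio] at hk hk'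
    have key : ∀ p q : ℕ, p < q → q ≤ n → Disjoint (A p ∩ B p) (A q ∩ B q) := by
      intro p q hpq hq
      rw [Set.disjoint_left]
      intro ω hp hq'
      obtain ⟨h1, _, _, _⟩ := (hEk p (by omega) ω).mp hp
      obtain ⟨_, h2, _, _⟩ := (hEk q hq ω).mp hq'
      exact absurd h1 (ne_of_lt (h2 p hpq))
    rcases hne.lt_or_gt with h | h
    · exact key k k' h (by omega)
    · exact (key k' k h (by omega)).symm
  -- measurability
  have hmeasE : ∀ k, MeasurableSet (A k ∩ B k) := fun k =>
    (meas_tuple hXmeas (fun i : Fin k => (i : ℕ)) (QAr k x)).inter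
      (meas_tuple hXmeas (fun i : Fin (n - k) => k + (i : ℕ)) (QB (n - k) r))
  -- per-term identity
  have hterm : ∀ k, P (A k ∩ B k)
      = P {ω | Swalk X k ω = x ∧ ∀ j : ℕ, 1 ≤ j → j ≤ k → 0 < Swalk X j ω}
        * P {ω | Swalk X (n - k) ω = -(r : ℤ) ∧
            ∀ j : ℕ, 1 ≤ j → j ≤ n - k → Swalk X j ω ≤ 0} := by
    intro k
    have hsplit : P (A k ∩ B k) = P (A k) * P (B k) :=
      prob_inter_shift hXmeas hXindep k (n - k) (QAr k x) (QB (n - k) r)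
    -- first factor
    have hSA : {ω | Swalk X k ω = x ∧ ∀ j : ℕ, 1 ≤ j → j ≤ k → 0 < Swalk X j ω}
        = {ω | QAl k x (fun i : Fin k => X (i : ℕ) ω)} := by
      ext ω
      simp only [Set.mem_setOf_eq, QAl]
      constructor
      · rintro ⟨h1, h2⟩
        refine ⟨by rw [psum_tupleX0 X k ω le_rfl]; exact h1, fun j hj1 hj2 => ?_⟩
        rw [psum_tupleX0 X k ω hj2]; exact h2 j hj1 hj2
      · rintro ⟨h1, h2⟩
        rw [psum_tupleX0 X k ω le_rfl] at h1
        refine ⟨h1, fun j hj1 hj2 => ?_⟩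
        have := h2 j hj1 hj2
        rw [psum_tupleX0 X k ω hj2] at this
        exact this
    have hgrev : Function.Injective (fun i : Fin k => ((Fin.rev i : Fin k) : ℕ)) :=
      fun a b h => Fin.rev_injective (Fin.val_injective h)
    have hArev : {ω | QAl k x (fun i : Fin k => X (i : ℕ) ω)}
        = {ω | QAr k x (fun i : Fin k => X ((Fin.rev i : Fin k) : ℕ) ω)} := by
      ext ω
      exact QAl_iff k x (fun i : Fin k => X (i : ℕ) ω)
    have hAeq : P {ω | Swalk X k ω = x ∧ ∀ j : ℕ, 1 ≤ j → j ≤ k → 0 < Swalk X j ω}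
        = P (A k) := by
      rw [hSA, hArev, hA]
      exact prob_tuple_congr hXmeas hXindep hXident hgrev (QAr k x)
    -- second factor
    have hSB : {ω | Swalk X (n - k) ω = -(r : ℤ) ∧
          ∀ j : ℕ, 1 ≤ j → j ≤ n - k → Swalk X j ω ≤ 0}
        = {ω | QB (n - k) r (fun i : Fin (n - k) => X (i : ℕ) ω)} := by
      ext ω
      simp only [Set.mem_setOf_eq, QB]
      constructor
      · rintro ⟨h1, h2⟩
        refine ⟨by rw [psum_tupleX0 X (n - k) ω le_rfl]; exact h1, fun j hj => ?_⟩
        rw [psum_tupleX0 X (n - k) ω hj]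
        rcases Nat.eq_zero_or_pos j with h0 | h0
        · subst h0; simp [Swalk]
        · exact h2 j h0 hj
      · rintro ⟨h1, h2⟩
        rw [psum_tupleX0 X (n - k) ω le_rfl] at h1
        refine ⟨h1, fun j hj1 hj2 => ?_⟩
        have := h2 j hj2
        rw [psum_tupleX0 X (n - k) ω hj2] at this
        exact this
    have hgsh : Function.Injective (fun i : Fin (n - k) => k + (i : ℕ)) :=
      fun a b h => Fin.val_injective (Nat.add_left_cancel h)
    have hBeq : P (B k) = P {ω | Swalk X (n - k) ω = -(r : ℤ) ∧
        ∀ j : ℕ, 1 ≤ j → j ≤ n - k → Swalk X j ω ≤ 0} := by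
      rw [hSB, hB]
      exact prob_tuple_congr hXmeas hXindep hXident hgsh (QB (n - k) r)
    rw [hsplit, ← hAeq, hBeq]
  -- conclusion
  have hsum : P {ω | Mwalk X n ω = x ∧ Swalk X n ω = x - r}
      = ∑ k ∈ Finset.range (n + 1), P (A k ∩ B k) := by
    rw [hunion, measure_biUnion_finset hdisj fun k _ => hmeasE k]
  simp only [pr]
  rw [hsum, ENNReal.toReal_sum (fun k _ => measure_ne_top P _)]
  refine Finset.sum_congr rfl fun k _ => ?_
  rw [hterm k, ENNReal.toReal_mul]
end
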